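/- arXiv:2512.00652 — 4 statements merged into one kernel-verified Lean document; each statement's English description precedes it below -/
import Mathlib

section
/- The only rational points on the affine curve y² + y = −2x⁶ + 9x² − 7 are (1, 0), (−1, 0), (1, −1), and (−1, −1). That is, for rational numbers x and y, the equation y² + y = −2x⁶ + 9x² − 7 holds if and only if (x, y) ∈ {(1, 0), (−1, 0), (1, −1), (−1, −1)}. -/
/-- If two integers are not coprime, some prime divides both. -/
lemma exists_common_prime_of_not_isCoprime {s t : ℤ} (h : ¬ IsCoprime s t) :
    ∃ ℓ : ℤ, Prime ℓ ∧ ℓ ∣ s ∧ ℓ ∣ t := by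
  have hg : Int.gcd s t ≠ 1 := fun hg => h (Int.isCoprime_iff_gcd_eq_one.mpr hg)
  obtain ⟨p, hp, hpd⟩ := Nat.exists_prime_and_dvd hg
  refine ⟨(p : ℤ), Int.prime_iff_natAbs_prime.mpr (by simpa using hp), ?_, ?_⟩
  · exact dvd_trans (Int.natCast_dvd_natCast.mpr hpd) (Int.gcd_dvd_left _ _)
  · exact dvd_trans (Int.natCast_dvd_natCast.mpr hpd) (Int.gcd_dvd_right _ _)

lemma isCoprime_of_sq_coprime {x y : ℤ} (h : IsCoprime (x ^ 2) (y ^ 2)) : IsCoprime x y := by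
  by_contra hcon
  obtain ⟨ℓ, hℓ, h1, h2⟩ := exists_common_prime_of_not_isCoprime hcon
  exact hℓ.not_unit (h.isUnit_of_dvd' (dvd_pow h1 two_ne_zero) (dvd_pow h2 two_ne_zero))

lemma sq_of_coprime_pos {a b c : ℤ} (h : IsCoprime a b) (heq : a * b = c ^ 2) (ha : 0 < a) :
    ∃ r : ℤ, 0 < r ∧ a = r ^ 2 := by
  obtain ⟨r0, hr | hr⟩ := Int.sq_of_isCoprime h heq
  · have hr0 : r0 ≠ 0 := by rintro rfl; rw [hr] at ha; simp at ha
    exact ⟨|r0|, abs_pos.mpr hr0, by rw [sq_abs]; exact hr⟩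
  · exfalso; nlinarith [sq_nonneg r0]

lemma pow4_of_coprime_pos {a b c : ℤ} (h : IsCoprime a b) (heq : a * b = c ^ 4) (ha : 0 < a) :
    ∃ r : ℤ, 0 < r ∧ a = r ^ 4 := by
  have hu : IsUnit (gcd a b) := by
    rw [← Int.coe_gcd, Int.isCoprime_iff_gcd_eq_one.mp h, Int.ofNat_one]
    exact isUnit_one
  obtain ⟨d, hd⟩ := exists_associated_pow_of_mul_eq_pow hu heq
  rcases Int.associated_iff.mp hd with h1 | h1
  · have hd0 : d ≠ 0 := by rintro rfl; rw [← h1] at ha; simp at ha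
    refine ⟨|d|, abs_pos.mpr hd0, ?_⟩
    rw [pow_abs d 4, abs_of_nonneg (by positivity : (0:ℤ) ≤ d ^ 4), h1]
  · exfalso; nlinarith [sq_nonneg (d^2), sq_nonneg d]

/-- The descent step used in the even case of the right-triangle theorem:
from `s⁴ + 4r⁴ = a²` (coprime, `s` odd) produce a smaller solution of
`u⁴ = v⁴ + w²`. -/
lemma pyth_descent {a r s : ℤ} (ha : 0 < a) (hr : 0 < r) (hs : 0 < s)
    (hsodd : s % 2 = 1) (hco : IsCoprime r s)
    (hsum : s ^ 4 + 4 * r ^ 4 = a ^ 2) :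
    ∃ u v : ℤ, 0 < u ∧ v ≠ 0 ∧ u ^ 2 < a ∧ u ^ 4 = v ^ 4 + s ^ 2 := by
  have ht : PythagoreanTriple (s ^ 2) (2 * r ^ 2) a := by
    unfold PythagoreanTriple; linear_combination hsum
  have hco2 : IsCoprime (s ^ 2) (2 * r ^ 2) := by
    have h2 : IsCoprime s 2 := by
      obtain ⟨l, hl⟩ := Int.odd_iff.mpr hsodd
      exact ⟨1, -l, by rw [hl]; ring⟩
    exact IsCoprime.mul_right (h2.pow_left) (hco.symm.pow)
  have hs2odd : s ^ 2 % 2 = 1 := by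
    obtain ⟨l, hl⟩ := Int.odd_iff.mpr hsodd
    have : s ^ 2 = 2 * (2 * l ^ 2 + 2 * l) + 1 := by rw [hl]; ring
    omega
  obtain ⟨M, N, hsM, hrM, haM, hMN, hMpar, hM0⟩ :=
    ht.coprime_classification' (Int.isCoprime_iff_gcd_eq_one.mp hco2) hs2odd ha
  have hrMN : r ^ 2 = M * N := by linarith
  have hMne : M ≠ 0 := by
    rintro rfl; rw [zero_mul] at hrMN
    exact (by positivity : (0:ℤ) < r ^ 2).ne' hrMN
  have hMpos : 0 < M := lt_of_le_of_ne hM0 (Ne.symm hMne)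
  have hNpos : 0 < N := by
    rcases lt_trichotomy N 0 with h | h | h
    · exfalso
      have : M * N < 0 := mul_neg_of_pos_of_neg hMpos h
      nlinarith [sq_nonneg r]
    · exfalso; rw [h, mul_zero] at hrMN; nlinarith [sq_nonneg r]
    · exact h
  have hMNco : IsCoprime M N := Int.isCoprime_iff_gcd_eq_one.mpr hMN
  obtain ⟨u, hupos, hMu⟩ := sq_of_coprime_pos hMNco hrMN.symm hMpos
  obtain ⟨v, hvpos, hNv⟩ :=
    sq_of_coprime_pos hMNco.symm (show N * M = r ^ 2 by linear_combination -hrMN) hNpos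
  refine ⟨u, v, hupos, hvpos.ne', ?_, ?_⟩
  · have : M < a := by nlinarith
    rw [hMu] at this; exact this
  · rw [hMu, hNv] at hsM
    linear_combination -hsM

/-- Fermat's right triangle theorem: `a ^ 4 = b ^ 4 + c ^ 2` has no
nontrivial solutions. -/
theorem not_pow4_add_sq_eq_pow4 :
    ∀ a b c : ℤ, 0 < a → b ≠ 0 → c ≠ 0 → a ^ 4 ≠ b ^ 4 + c ^ 2 := by
  suffices H : ∀ n : ℕ, ∀ a b c : ℤ, a.natAbs = n → 0 < a → b ≠ 0 → c ≠ 0 →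
      a ^ 4 ≠ b ^ 4 + c ^ 2 from fun a b c => H a.natAbs a b c rfl
  intro n
  induction n using Nat.strong_induction_on with
  | _ n IH =>
  intro a b c hn ha hb hc heq
  rcases eq_or_ne (Int.gcd a b) 1 with hg1 | hg1
  swap
  · -- non-coprime: divide by the gcd and descend
    have hg0 : Int.gcd a b ≠ 0 := fun h0 => by
      rw [Int.gcd_eq_zero_iff] at h0; exact absurd h0.1 (by omega)
    have hgpos : 0 < (Int.gcd a b : ℤ) := by
      exact_mod_cast Nat.pos_of_ne_zero hg0
    have hg2 : 2 ≤ (Int.gcd a b : ℤ) := by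
      have : 2 ≤ Int.gcd a b := by omega
      exact_mod_cast this
    set g : ℤ := (Int.gcd a b : ℤ) with hgdef
    obtain ⟨a1, ha1⟩ : g ∣ a := Int.gcd_dvd_left _ _
    obtain ⟨b1, hb1⟩ : g ∣ b := Int.gcd_dvd_right _ _
    have hcdvd : (g ^ 2) ^ 2 ∣ c ^ 2 := by
      refine ⟨a1 ^ 4 - b1 ^ 4, ?_⟩
      have hcc : c ^ 2 = a ^ 4 - b ^ 4 := by linarith
      rw [hcc, ha1, hb1]; ring
    obtain ⟨c1, hc1⟩ : g ^ 2 ∣ c := (Int.pow_dvd_pow_iff two_ne_zero).mp hcdvd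
    have hg4 : g ^ 4 ≠ 0 := by positivity
    have key : a1 ^ 4 = b1 ^ 4 + c1 ^ 2 := by
      apply mul_left_cancel₀ hg4
      rw [ha1, hb1, hc1] at heq
      linear_combination heq
    have ha1pos : 0 < a1 := by
      rcases lt_trichotomy a1 0 with h | h | h
      · nlinarith [ha, ha1]
      · rw [h, mul_zero] at ha1; omega
      · exact h
    have hb1ne : b1 ≠ 0 := by rintro rfl; rw [mul_zero] at hb1; exact hb hb1
    have hc1ne : c1 ≠ 0 := by rintro rfl; rw [mul_zero] at hc1; exact hc hc1
    have hlt : a1.natAbs < n := by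
      rw [← hn]
      exact Int.natAbs_lt_natAbs_of_nonneg_of_lt (le_of_lt ha1pos) (by nlinarith)
    exact IH _ hlt a1 b1 c1 rfl ha1pos hb1ne hc1ne key
  -- coprime case
  have hco : IsCoprime a b := Int.isCoprime_iff_gcd_eq_one.mpr hg1
  have haodd : a % 2 = 1 := by
    rcases Int.even_or_odd a with hae | hao
    · exfalso
      have hbodd : Odd b := by
        rcases Int.even_or_odd b with hbe | hbo
        · exfalso
          obtain ⟨u, v, huv⟩ := hco
          have : Even (u * a + v * b) := (hae.mul_left u).add (hbe.mul_left v)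
          rw [huv] at this
          exact (by decide : ¬ Even (1:ℤ)) this
        · exact hbo
      obtain ⟨k, hk⟩ := hae
      obtain ⟨l, hl⟩ := hbodd
      have h4 : ∀ u v w : ZMod 4, (u + u)^4 ≠ (2*v+1)^4 + w^2 := by decide
      apply h4 (k : ZMod 4) (l : ZMod 4) (c : ZMod 4)
      have hcast := congrArg (fun z : ℤ => (z : ZMod 4)) heq
      rw [hk, hl] at hcast
      push_cast at hcast
      linear_combination hcast
    · exact Int.odd_iff.mp hao
  have hbcco : IsCoprime b c := by
    by_contra hcon
    obtain ⟨ℓ, hℓ, h1, h2⟩ := exists_common_prime_of_not_isCoprime hcon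
    have hℓa : ℓ ∣ a := by
      refine hℓ.dvd_of_dvd_pow (n := 4) ?_
      rw [heq]
      exact dvd_add (dvd_pow h1 four_ne_zero) (dvd_pow h2 two_ne_zero)
    exact hℓ.not_unit (hco.isUnit_of_dvd' hℓa h1)
  have ht : PythagoreanTriple (b^2) c (a^2) := by
    unfold PythagoreanTriple; linear_combination -heq
  have htg : Int.gcd (b^2) c = 1 :=
    Int.isCoprime_iff_gcd_eq_one.mp (hbcco.pow_left)
  rcases Int.even_or_odd b with hbe | hbo
  · -- b even, c odd
    have hcodd : c % 2 = 1 := by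
      rcases Int.even_or_odd c with hce | hco2
      · exfalso
        obtain ⟨k, hk⟩ := hbe
        obtain ⟨l, hl⟩ := hce
        have haoddZ : Odd a := Int.odd_iff.mpr haodd
        obtain ⟨j, hj⟩ := haoddZ
        have h4 : ∀ u v w : ZMod 4, (2*u+1)^4 ≠ (v+v)^4 + (w+w)^2 := by decide
        apply h4 (j : ZMod 4) (k : ZMod 4) (l : ZMod 4)
        have hcast := congrArg (fun z : ℤ => (z : ZMod 4)) heq
        rw [hk, hl, hj] at hcast
        push_cast at hcast
        linear_combination hcast
      · exact Int.odd_iff.mp hco2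
    have ht' : PythagoreanTriple c (b^2) (a^2) := by
      unfold PythagoreanTriple; linear_combination -heq
    have htg' : Int.gcd c (b^2) = 1 := by rw [Int.gcd_comm]; exact htg
    obtain ⟨m, n', hc2, hb2, ha2, hmn, hpar, hm⟩ :=
      ht'.coprime_classification' htg' hcodd (by positivity)
    have hbsqpos : 0 < b ^ 2 := by positivity
    have hmne : m ≠ 0 := by
      rintro rfl; rw [mul_zero, zero_mul] at hb2; rw [hb2] at hbsqpos; exact lt_irrefl _ hbsqpos
    have hmpos : 0 < m := lt_of_le_of_ne hm (Ne.symm hmne)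
    have hnpos : 0 < n' := by
      rcases lt_trichotomy n' 0 with h | h | h
      · exfalso; nlinarith
      · exfalso; rw [h, mul_zero] at hb2; rw [hb2] at hbsqpos; exact lt_irrefl _ hbsqpos
      · exact h
    have hmnco : IsCoprime m n' := Int.isCoprime_iff_gcd_eq_one.mpr hmn
    obtain ⟨b1, hb1⟩ := hbe
    rcases hpar with ⟨hm2, hn2⟩ | ⟨hm2, hn2⟩
    · -- m even, n' odd
      obtain ⟨m1, hm1⟩ := Int.even_iff.mpr hm2
      have hb1sq : m1 * n' = b1 ^ 2 := by
        have h4 : (4:ℤ) * (m1 * n') = 4 * b1 ^ 2 := by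
          rw [hb1, hm1] at hb2; linear_combination -hb2
        linarith
      have hm1co : IsCoprime m1 n' :=
        IsCoprime.of_isCoprime_of_dvd_left hmnco ⟨2, by rw [hm1]; ring⟩
      have hm1pos : 0 < m1 := by omega
      obtain ⟨r, hrpos, hrm⟩ := sq_of_coprime_pos hm1co hb1sq hm1pos
      obtain ⟨s, hspos, hsn⟩ :=
        sq_of_coprime_pos hm1co.symm (show n' * m1 = b1 ^ 2 by linear_combination hb1sq) hnpos
      have hsodd : s % 2 = 1 := by
        rcases Int.even_or_odd s with hse | hso
        · exfalso
          obtain ⟨t, htt⟩ := hse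
          have : n' = 2 * (2 * t ^ 2) := by rw [hsn, htt]; ring
          omega
        · exact Int.odd_iff.mp hso
      have hrsco : IsCoprime r s := by
        apply isCoprime_of_sq_coprime; rw [← hrm, ← hsn]; exact hm1co
      have hsum : s ^ 4 + 4 * r ^ 4 = a ^ 2 := by
        rw [hm1, hrm, hsn] at ha2; linear_combination -ha2
      obtain ⟨u, v, hupos, hvne, hult, key⟩ :=
        pyth_descent ha hrpos hspos hsodd hrsco hsum
      have hlt : u.natAbs < n := by
        have h2 : (u^2).natAbs < a.natAbs := Int.natAbs_lt_natAbs_of_nonneg_of_lt (by positivity) hult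
        have h3 : u.natAbs ≤ (u^2).natAbs := by
          rw [Int.natAbs_pow]; exact Nat.le_self_pow two_ne_zero _
        omega
      exact IH _ hlt u v s rfl hupos hvne (by omega) key
    · -- m odd, n' even
      obtain ⟨n1, hn1⟩ := Int.even_iff.mpr hn2
      have hb1sq : m * n1 = b1 ^ 2 := by
        have h4 : (4:ℤ) * (m * n1) = 4 * b1 ^ 2 := by
          rw [hb1, hn1] at hb2; linear_combination -hb2
        linarith
      have hn1co : IsCoprime m n1 :=
        IsCoprime.of_isCoprime_of_dvd_right hmnco ⟨2, by rw [hn1]; ring⟩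
      have hn1pos : 0 < n1 := by omega
      obtain ⟨r, hrpos, hrm⟩ := sq_of_coprime_pos hn1co hb1sq hmpos
      obtain ⟨s, hspos, hsn⟩ :=
        sq_of_coprime_pos hn1co.symm (show n1 * m = b1 ^ 2 by linear_combination hb1sq) hn1pos
      have hrodd : r % 2 = 1 := by
        rcases Int.even_or_odd r with hre | hro
        · exfalso
          obtain ⟨t, htt⟩ := hre
          have : m = 2 * (2 * t ^ 2) := by rw [hrm, htt]; ring
          omega
        · exact Int.odd_iff.mp hro
      have hrsco : IsCoprime s r := by
        apply isCoprime_of_sq_coprime; rw [← hrm, ← hsn]; exact hn1co.symm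
      have hsum : r ^ 4 + 4 * s ^ 4 = a ^ 2 := by
        rw [hrm, hn1, hsn] at ha2; linear_combination -ha2
      obtain ⟨u, v, hupos, hvne, hult, key⟩ :=
        pyth_descent ha hspos hrpos hrodd hrsco hsum
      have hlt : u.natAbs < n := by
        have h2 : (u^2).natAbs < a.natAbs := Int.natAbs_lt_natAbs_of_nonneg_of_lt (by positivity) hult
        have h3 : u.natAbs ≤ (u^2).natAbs := by
          rw [Int.natAbs_pow]; exact Nat.le_self_pow two_ne_zero _
        omega
      exact IH _ hlt u v r rfl hupos hvne (by omega) key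
  · -- b odd
    have hb2odd : b ^ 2 % 2 = 1 := by
      obtain ⟨l, hl⟩ := hbo
      have : b ^ 2 = 2 * (2*l^2 + 2*l) + 1 := by rw [hl]; ring
      omega
    obtain ⟨m, n', hb2, hc2, ha2, hmn, hpar, hm⟩ :=
      ht.coprime_classification' htg hb2odd (by positivity)
    have hnne : n' ≠ 0 := by
      rintro rfl; rw [mul_zero] at hc2; exact hc hc2
    have hmne : m ≠ 0 := by
      rintro rfl
      have : b ^ 2 = - n' ^ 2 := by rw [hb2]; ring
      nlinarith [sq_nonneg b, sq_nonneg n']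
    have habne : a * b ≠ 0 := mul_ne_zero (by omega) hb
    have key : m ^ 4 = n' ^ 4 + (a * b) ^ 2 := by
      linear_combination (-(a^2)) * hb2 + (n'^2 - m^2) * ha2
    have hlt : m.natAbs < n := by
      rw [← hn]
      have hn2pos : 0 < n' ^ 2 := by positivity
      have h1 : m ^ 2 < a ^ 2 := by nlinarith
      have h2 : (m^2).natAbs < (a^2).natAbs :=
        Int.natAbs_lt_natAbs_of_nonneg_of_lt (by positivity) h1
      rw [Int.natAbs_pow, Int.natAbs_pow] at h2
      exact lt_of_pow_lt_pow_left₀ 2 (Nat.zero_le _) h2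
    have hmpos : 0 < m := lt_of_le_of_ne hm (Ne.symm hmne)
    exact IH _ hlt m n' (a*b) rfl hmpos hnne habne key
-- Section 2: x⁴ + y⁴ = 2z² forces x² = y² (for coprime x,y)
lemma isCoprime_of_pow_coprime {x y : ℤ} {m n : ℕ} (hm : m ≠ 0) (hn : n ≠ 0)
    (h : IsCoprime (x ^ m) (y ^ n)) : IsCoprime x y := by
  by_contra hcon
  obtain ⟨ℓ, hℓ, h1, h2⟩ := exists_common_prime_of_not_isCoprime hcon
  exact hℓ.not_unit (h.isUnit_of_dvd' (dvd_pow h1 hm) (dvd_pow h2 hn))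

lemma sq_eq_sq_of_pow4_add_pow4_eq_two_mul_sq {x y z : ℤ} (hco : IsCoprime x y)
    (h : x ^ 4 + y ^ 4 = 2 * z ^ 2) : x ^ 2 = y ^ 2 := by
  have hxodd : Odd x := by
    rcases Int.even_or_odd x with hx | hx
    · exfalso
      rcases Int.even_or_odd y with hy | hy
      · obtain ⟨u, v, huv⟩ := hco
        have : Even (u * x + v * y) := (hx.mul_left u).add (hy.mul_left v)
        rw [huv] at this
        exact (by decide : ¬ Even (1:ℤ)) this
      · have h1 : Even (x ^ 4) := Int.even_pow.mpr ⟨hx, by norm_num⟩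
        have h2 : Odd (y ^ 4) := hy.pow
        have h3 : Odd (x ^ 4 + y ^ 4) := h1.add_odd h2
        rw [h] at h3
        exact (Int.not_odd_iff_even.mpr ⟨z ^ 2, by ring⟩) h3
    · exact hx
  have hyodd : Odd y := by
    rcases Int.even_or_odd y with hy | hy
    · exfalso
      have h1 : Even (y ^ 4) := Int.even_pow.mpr ⟨hy, by norm_num⟩
      have h2 : Odd (x ^ 4) := hxodd.pow
      have h3 : Odd (x ^ 4 + y ^ 4) := h2.add_even h1
      rw [h] at h3
      exact (Int.not_odd_iff_even.mpr ⟨z ^ 2, by ring⟩) h3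
    · exact hy
  have hev : Even (x ^ 4 - y ^ 4) := (hxodd.pow).sub_odd (hyodd.pow)
  obtain ⟨w, hw⟩ := hev
  have hw' : x ^ 4 - y ^ 4 = 2 * w := by linarith
  by_contra hne
  have hwne : w ≠ 0 := by
    rintro rfl
    rw [mul_zero] at hw'
    have h4 : (x ^ 2 - y ^ 2) * (x ^ 2 + y ^ 2) = 0 := by linear_combination hw'
    rcases mul_eq_zero.mp h4 with h5 | h5
    · exact hne (by linarith)
    · have hx2 : 0 < x ^ 2 := by
        have : x ≠ 0 := by rintro rfl; exact (by decide : ¬ Odd (0:ℤ)) hxodd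
        positivity
      have hy2 : 0 < y ^ 2 := by
        have : y ≠ 0 := by rintro rfl; exact (by decide : ¬ Odd (0:ℤ)) hyodd
        positivity
      linarith
  have hxyne : x * y ≠ 0 := by
    have hx0 : x ≠ 0 := by rintro rfl; exact (by decide : ¬ Odd (0:ℤ)) hxodd
    have hy0 : y ≠ 0 := by rintro rfl; exact (by decide : ¬ Odd (0:ℤ)) hyodd
    exact mul_ne_zero hx0 hy0
  have hzne : z ≠ 0 := by
    rintro rfl
    have hx4 : x ^ 4 = - y ^ 4 := by linarith
    have : (0:ℤ) < x ^ 4 := by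
      have : x ≠ 0 := by rintro rfl; exact (by decide : ¬ Odd (0:ℤ)) hxodd
      positivity
    nlinarith [this, hx4, sq_nonneg (y ^ 2), sq_nonneg (x ^ 2)]
  have key : |z| ^ 4 = (x * y) ^ 4 + w ^ 2 := by
    have habs : |z| ^ 4 = z ^ 4 := by
      rw [pow_abs, abs_of_nonneg (by positivity : (0:ℤ) ≤ z ^ 4)]
    rw [habs]
    have h4 : 4 * z ^ 4 = 4 * ((x * y) ^ 4 + w ^ 2) := by
      linear_combination (-(x^4 + y^4 + 2*z^2)) * h + (x^4 - y^4 + 2*w) * hw'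
    linarith
  exact not_pow4_add_sq_eq_pow4 |z| (x * y) w (abs_pos.mpr hzne) hxyne hwne key
-- Section 3 helper: splitting s*t = 5*a⁴ with s,t coprime
lemma five_split {s t a : ℤ} (ha : 0 < a) (hs : 0 < s) (ht : 0 < t)
    (hsodd : s % 2 = 1) (htodd : t % 2 = 1)
    (hco : IsCoprime s t) (hst : s * t = 5 * a ^ 4) (h5 : (5:ℤ) ∣ t) :
    ∃ d e : ℤ, 0 < d ∧ 0 < e ∧ s = d^4 ∧ t = 5*e^4 ∧ a^2 = d^2*e^2 ∧
      IsCoprime d e ∧ d % 2 = 1 ∧ e % 2 = 1 := by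
  obtain ⟨t1, ht1⟩ := h5
  have ht1pos : 0 < t1 := by nlinarith
  have hst1 : s * t1 = a ^ 4 := by
    have h5' : 5 * (s * t1) = 5 * a ^ 4 := by rw [ht1] at hst; linear_combination hst
    linarith
  have hco1 : IsCoprime s t1 :=
    IsCoprime.of_isCoprime_of_dvd_right hco ⟨5, by rw [ht1]; ring⟩
  obtain ⟨d, hdpos, hsd⟩ := pow4_of_coprime_pos hco1 hst1 hs
  obtain ⟨e, hepos, hte⟩ :=
    pow4_of_coprime_pos hco1.symm (show t1 * s = a ^ 4 by linear_combination hst1) ht1pos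
  have hae : a ^ 2 = d ^ 2 * e ^ 2 := by
    have hfac : (a^2 - d^2*e^2) * (a^2 + d^2*e^2) = 0 := by
      linear_combination -hst1 + t1 * hsd + d^4 * hte
    rcases mul_eq_zero.mp hfac with h | h
    · linarith
    · exfalso
      have : 0 < a ^ 2 + d^2*e^2 := by positivity
      linarith
  have hdeco : IsCoprime d e := by
    apply isCoprime_of_pow_coprime (m := 4) (n := 4) (by norm_num) (by norm_num)
    rw [← hsd, ← hte]; exact hco1
  have hdodd : d % 2 = 1 := by
    rcases Int.even_or_odd d with ⟨i, hi⟩ | ⟨i, hi⟩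
    · exfalso
      have : s = 2*(8*i^4) := by rw [hsd, hi]; ring
      omega
    · omega
  have heodd : e % 2 = 1 := by
    rcases Int.even_or_odd e with ⟨i, hi⟩ | ⟨i, hi⟩
    · exfalso
      have : t = 2*(40*i^4) := by rw [ht1, hte, hi]; ring
      omega
    · omega
  exact ⟨d, e, hdpos, hepos, hsd, by rw [ht1, hte], hae, hdeco, hdodd, heodd⟩

set_option maxRecDepth 20000 in
private lemma zmod81_aux : ∀ mm tt : ZMod 81, mm^2 ≠ 27*(3*tt+2) := by decide

-- Section 3: the main integer lemma
set_option maxHeartbeats 1000000 in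
lemma main_int_lemma (p q m : ℤ) (hq : 0 < q) (hco : IsCoprime p q)
    (hm0 : m ^ 2 = (3*q^2 - 2*p^2) * (4*p^4 + 6*p^2*q^2 - 9*q^4)) :
    q = 1 ∧ p ^ 2 = 1 := by
  have p2Z : Prime (2:ℤ) := Int.prime_two
  have p3Z : Prime (3:ℤ) := Int.prime_three
  have p5Z : Prime (5:ℤ) := by rw [Int.prime_iff_natAbs_prime]; norm_num
  -- p ≠ 0
  have hp0 : p ≠ 0 := by
    rintro rfl
    have : m ^ 2 = -27 * q ^ 6 := by linear_combination hm0
    nlinarith [sq_nonneg m, pow_pos hq 6]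
  have hp2pos : 0 < p ^ 2 := by positivity
  -- q is odd
  have hqodd : q % 2 = 1 := by
    rcases Int.even_or_odd q with hqe | hqo
    swap
    · exact Int.odd_iff.mp hqo
    exfalso
    have hpodd : Odd p := by
      rcases Int.even_or_odd p with hpe | hpo
      · exfalso
        obtain ⟨u, v, huv⟩ := hco
        have : Even (u * p + v * q) := (hpe.mul_left u).add (hqe.mul_left v)
        rw [huv] at this
        exact (by decide : ¬ Even (1:ℤ)) this
      · exact hpo
    obtain ⟨q1, hq1⟩ := hqe
    have hK1 : Odd (6*q1^2 - p^2) := Even.sub_odd (⟨3*q1^2, by ring⟩) (hpodd.pow)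
    have hK2 : Odd (p^4 + (6*p^2*q1^2 - 36*q1^4)) :=
      Odd.add_even (hpodd.pow) ⟨3*p^2*q1^2 - 18*q1^4, by ring⟩
    obtain ⟨t, ht⟩ := hK1.mul hK2
    have hm8 : m ^ 2 = 8 * ((6*q1^2 - p^2) * (p^4 + (6*p^2*q1^2 - 36*q1^4))) := by
      rw [hq1] at hm0; linear_combination hm0
    rw [ht] at hm8
    have hz : ∀ mm tt : ZMod 16, mm^2 ≠ 8*(2*tt+1) := by decide
    apply hz (m : ZMod 16) (t : ZMod 16)
    have hcast := congrArg (fun z : ℤ => (z : ZMod 16)) hm8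
    push_cast at hcast
    linear_combination hcast
  -- 3 does not divide p
  have hnp3 : ¬ (3:ℤ) ∣ p := by
    rintro ⟨p1, hp1⟩
    have hq3 : ¬ (3:ℤ) ∣ q := by
      intro h3q
      have := hco.isUnit_of_dvd' ⟨p1, hp1⟩ h3q
      rw [Int.isUnit_iff] at this
      omega
    have hq30 : ((q : ZMod 3)) ≠ 0 := by
      intro h0
      exact hq3 ((ZMod.intCast_zmod_eq_zero_iff_dvd q 3).mp h0)
    obtain ⟨K, hKdef⟩ : ∃ K : ℤ, K = (q^2 - 6*p1^2) * (36*p1^4 + 6*p1^2*q^2 - q^4) :=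
      ⟨_, rfl⟩
    have hm27 : m ^ 2 = 27 * K := by
      rw [hKdef]
      rw [hp1] at hm0
      linear_combination hm0
    have hK3 : K % 3 = 2 := by
      rw [hKdef]
      have hzz : ∀ x y : ZMod 3, x ≠ 0 → (x^2 - 6*y^2) * (36*y^4 + 6*y^2*x^2 - x^4) = 2 := by
        decide
      have hcast : (((q^2 - 6*p1^2) * (36*p1^4 + 6*p1^2*q^2 - q^4) : ℤ) : ZMod 3)
          = ((2:ℤ) : ZMod 3) := by
        push_cast
        have := hzz (q : ZMod 3) (p1 : ZMod 3) hq30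
        linear_combination this
      have hmeq := (ZMod.intCast_eq_intCast_iff _ _ _).mp hcast
      have h3 : (q^2 - 6*p1^2) * (36*p1^4 + 6*p1^2*q^2 - q^4) % 3 = 2 % 3 := hmeq
      omega
    obtain ⟨t, ht⟩ : ∃ t, K = 3*t + 2 := ⟨(K - 2) / 3, by omega⟩
    rw [ht] at hm27
    apply zmod81_aux (m : ZMod 81) (t : ZMod 81)
    have hcast := congrArg (fun z : ℤ => (z : ZMod 81)) hm27
    push_cast at hcast
    linear_combination hcast
  -- opaque names for the two factors
  obtain ⟨A, hAdef⟩ : ∃ A : ℤ, A = 3*q^2 - 2*p^2 := ⟨_, rfl⟩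
  obtain ⟨B, hBdef⟩ : ∃ B : ℤ, B = 4*p^4 + 6*p^2*q^2 - 9*q^4 := ⟨_, rfl⟩
  have hm' : m ^ 2 = A * B := by rw [hAdef, hBdef]; exact hm0
  -- A and B are coprime
  have hABco : IsCoprime A B := by
    by_contra hcon
    obtain ⟨ℓ, hℓ, hℓA, hℓB⟩ := exists_common_prime_of_not_isCoprime hcon
    have hℓ9q : ℓ ∣ 9 * q ^ 4 := by
      have h9 : 9 * q ^ 4 = B + (2*(p^2 + 3*q^2)) * A := by rw [hAdef, hBdef]; ring
      rw [h9]
      exact dvd_add hℓB (Dvd.dvd.mul_left hℓA _)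
    rcases hℓ.dvd_mul.mp hℓ9q with h9 | hq4
    · have hℓ3 : ℓ ∣ 3 := hℓ.dvd_of_dvd_pow (n := 2)
        ((by norm_num : (9:ℤ) = 3^2) ▸ h9)
      have hassoc : Associated ℓ 3 := hℓ.associated_of_dvd p3Z hℓ3
      have h3A : (3:ℤ) ∣ A := (Associated.dvd_iff_dvd_left hassoc).mp hℓA
      have h32p : (3:ℤ) ∣ 2 * p ^ 2 := by
        have h2 : 2 * p ^ 2 = 3 * (q * q) - A := by rw [hAdef]; ring
        rw [h2]
        exact dvd_sub (Dvd.intro _ rfl) h3A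
      rcases p3Z.dvd_mul.mp h32p with h32 | h3p2
      · norm_num at h32
      · exact hnp3 (p3Z.dvd_of_dvd_pow h3p2)
    · have hℓq : ℓ ∣ q := hℓ.dvd_of_dvd_pow hq4
      have hℓ2p : ℓ ∣ 2 * p ^ 2 := by
        have h2 : 2 * p ^ 2 = 3 * q * q - A := by rw [hAdef]; ring
        rw [h2]
        exact dvd_sub ((hℓq.mul_left 3).mul_right q) hℓA
      rcases hℓ.dvd_mul.mp hℓ2p with h2 | hp2
      · have h2q : (2:ℤ) ∣ q := by
          have hassoc : Associated ℓ 2 := hℓ.associated_of_dvd p2Z h2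
          exact (Associated.dvd_iff_dvd_left hassoc).mp hℓq
        omega
      · have hℓp : ℓ ∣ p := hℓ.dvd_of_dvd_pow hp2
        exact hℓ.not_unit (hco.isUnit_of_dvd' hℓp hℓq)
  -- A ≠ 0
  have hAne : A ≠ 0 := by
    intro h0
    rw [hAdef] at h0
    have h3 : (3:ℤ) ∣ 2 * p ^ 2 := ⟨q^2, by linarith⟩
    rcases p3Z.dvd_mul.mp h3 with h32 | h3p2
    · norm_num at h32
    · exact hnp3 (p3Z.dvd_of_dvd_pow h3p2)
  -- B ≠ 0
  have hBne : B ≠ 0 := by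
    intro h0
    rw [hBdef] at h0
    have hT : (4*p^2 + 3*q^2)^2 = 45 * q^4 := by linear_combination 4 * h0
    have h5T : (5:ℤ) ∣ 4*p^2 + 3*q^2 := by
      apply p5Z.dvd_of_dvd_pow (n := 2)
      exact ⟨9 * q^4, by linarith⟩
    obtain ⟨T1, hT1⟩ := h5T
    have hT1sq : 5 * T1 ^ 2 = 9 * q ^ 4 := by
      have h25 : 25 * T1 ^ 2 = 45 * q ^ 4 := by rw [hT1] at hT; linear_combination hT
      linarith
    have h5q : (5:ℤ) ∣ q := by
      apply p5Z.dvd_of_dvd_pow (n := 4)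
      have h59 : (5:ℤ) ∣ 9 * q ^ 4 := ⟨T1^2, by linarith⟩
      rcases p5Z.dvd_mul.mp h59 with h59' | hq4
      · norm_num at h59'
      · exact hq4
    have h5p : (5:ℤ) ∣ p := by
      apply p5Z.dvd_of_dvd_pow (n := 2)
      have h54 : (5:ℤ) ∣ 4 * p ^ 2 := by
        obtain ⟨q5, hq5⟩ := h5q
        refine ⟨T1 - 15 * q5 ^ 2, ?_⟩
        rw [hq5] at hT1
        linear_combination hT1
      rcases p5Z.dvd_mul.mp h54 with h54' | hp2
      · norm_num at h54'
      · exact hp2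
    have := hco.isUnit_of_dvd' h5p h5q
    rw [Int.isUnit_iff] at this
    omega
  -- A > 0 and B > 0
  have hABpos : 0 < A * B := by
    have h1 : 0 ≤ A * B := hm' ▸ sq_nonneg m
    exact lt_of_le_of_ne h1 (Ne.symm (mul_ne_zero hAne hBne))
  have hApos : 0 < A := by
    by_contra hA
    push_neg at hA
    have hA' : A < 0 := lt_of_le_of_ne hA hAne
    have hB' : B < 0 := by
      rcases lt_trichotomy B 0 with h | h | h
      · exact h
      · exact absurd h hBne
      · exfalso; nlinarith
    rw [hAdef] at hA'
    rw [hBdef] at hB'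
    have h1 : 3*q^2 + 1 ≤ 2*p^2 := by omega
    have h2 : (3*q^2+1)^2 ≤ (2*p^2)^2 :=
      pow_le_pow_left₀ (by positivity) h1 2
    have h2' : 9*q^4 + 6*q^2 + 1 ≤ 4*p^4 := by nlinarith [h2]
    nlinarith [mul_nonneg (sq_nonneg p) (sq_nonneg q), sq_nonneg q]
  have hBpos : 0 < B := by
    rcases mul_pos_iff.mp hABpos with ⟨_, h⟩ | ⟨h, _⟩
    · exact h
    · exact absurd hApos (not_lt.mpr (le_of_lt h))
  -- extract square roots
  obtain ⟨a, hapos, haA⟩ := sq_of_coprime_pos hABco hm'.symm hApos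
  obtain ⟨b, hbpos, hbB⟩ :=
    sq_of_coprime_pos hABco.symm (show B * A = m ^ 2 by linear_combination -hm') hBpos
  have haA' : 3*q^2 - 2*p^2 = a^2 := by rw [← hAdef]; exact haA
  have hbB' : 4*p^4 + 6*p^2*q^2 - 9*q^4 = b^2 := by rw [← hBdef]; exact hbB
  -- p is odd
  have hpodd : p % 2 = 1 := by
    rcases Int.even_or_odd p with hpe | hpo
    swap
    · exact Int.odd_iff.mp hpo
    exfalso
    obtain ⟨k, hk⟩ := hpe
    obtain ⟨j, hj⟩ : ∃ j, q = 2*j + 1 := ⟨q / 2, by omega⟩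
    have hz : ∀ x y z : ZMod 8, x^2 ≠ 3*(2*y+1)^2 - 2*(z+z)^2 := by decide
    apply hz (a : ZMod 8) (j : ZMod 8) (k : ZMod 8)
    have hcast := congrArg (fun z : ℤ => (z : ZMod 8)) haA'
    rw [hj, hk] at hcast
    push_cast at hcast
    linear_combination -hcast
  -- a is odd
  have haodd : a % 2 = 1 := by
    rcases Int.even_or_odd a with ⟨i, hi⟩ | hao
    · exfalso
      obtain ⟨j, hj⟩ : ∃ j, q = 2*j + 1 := ⟨q / 2, by omega⟩
      have hA3 : Odd (3*q^2) := ⟨6*j^2+6*j+1, by rw [hj]; ring⟩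
      obtain ⟨w3, hw3⟩ := hA3
      have h1 : 2*(i^2 + i^2 + p^2) = 2*w3 + 1 := by
        rw [← hw3]
        linear_combination -haA' - hi * (a + i + i)
      omega
    · exact Int.odd_iff.mp hao
  -- b is odd
  have hbodd : b % 2 = 1 := by
    rcases Int.even_or_odd b with ⟨i, hi⟩ | hbo
    · exfalso
      obtain ⟨j, hj⟩ : ∃ j, q = 2*j + 1 := ⟨q / 2, by omega⟩
      have hB9 : Odd (9*q^4) := ⟨72*j^4 + 144*j^3 + 108*j^2 + 36*j + 4, by rw [hj]; ring⟩
      obtain ⟨w9, hw9⟩ := hB9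
      have h1 : 2*(2*p^4 + 3*p^2*q^2) - (2*w9+1) = 2*(i^2 + i^2) := by
        rw [← hw9]
        linear_combination hbB' + hi * (b + i + i)
      omega
    · exact Int.odd_iff.mp hbo
  -- the quartic relation for b
  have hb4 : b^2 = 4*p^4 - 2*p^2*a^2 - a^4 := by
    linear_combination -hbB' - (a^2 + 3*q^2) * haA'
  -- the two factors s, t with s*t = 5a⁴
  obtain ⟨s, hsdef⟩ : ∃ s : ℤ, s = 4*p^2 - a^2 - 2*b := ⟨_, rfl⟩
  obtain ⟨t, htdef⟩ : ∃ t : ℤ, t = 4*p^2 - a^2 + 2*b := ⟨_, rfl⟩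
  have hst : s * t = 5 * a ^ 4 := by rw [hsdef, htdef]; linear_combination -4*hb4
  have hUpos : 0 < 4*p^2 - a^2 := by
    by_contra hU
    push_neg at hU
    have h1 : 0 ≤ p^2 * (a^2 - 4*p^2) := mul_nonneg (sq_nonneg p) (by linarith)
    nlinarith [sq_nonneg b, pow_pos hapos 4, mul_nonneg (sq_nonneg p) (sq_nonneg a)]
  have hstpos : 0 < s * t := by rw [hst]; positivity
  have hsum2 : s + t = 2*(4*p^2 - a^2) := by rw [hsdef, htdef]; ring
  obtain ⟨hspos, htpos⟩ : 0 < s ∧ 0 < t := by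
    rcases mul_pos_iff.mp hstpos with ⟨h1, h2⟩ | ⟨h1, h2⟩
    · exact ⟨h1, h2⟩
    · exfalso; linarith
  have hsodd : s % 2 = 1 := by
    obtain ⟨ia, hia⟩ : ∃ i, a = 2*i+1 := ⟨a/2, by omega⟩
    have : s = 2*(2*p^2 - 2*ia^2 - 2*ia - b) - 1 := by rw [hsdef, hia]; ring
    omega
  have htodd : t % 2 = 1 := by
    obtain ⟨ia, hia⟩ : ∃ i, a = 2*i+1 := ⟨a/2, by omega⟩
    have : t = 2*(2*p^2 - 2*ia^2 - 2*ia + b) - 1 := by rw [htdef, hia]; ring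
    omega
  -- a and p are coprime
  have hpaco : IsCoprime a p := by
    by_contra hcon
    obtain ⟨ℓ, hℓ, hℓa, hℓp⟩ := exists_common_prime_of_not_isCoprime hcon
    have hℓ3q : ℓ ∣ 3*q^2 := by
      have h3 : 3*q^2 = a^2 + 2*p^2 := by linarith [haA']
      rw [h3]
      exact dvd_add (dvd_pow hℓa two_ne_zero) ((dvd_pow hℓp two_ne_zero).mul_left 2)
    rcases hℓ.dvd_mul.mp hℓ3q with h3 | hq2
    · have hassoc : Associated ℓ 3 := hℓ.associated_of_dvd p3Z h3
      exact hnp3 ((Associated.dvd_iff_dvd_left hassoc).mp hℓp)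
    · have hℓq : ℓ ∣ q := hℓ.dvd_of_dvd_pow hq2
      exact hℓ.not_unit (hco.isUnit_of_dvd' hℓp hℓq)
  -- s and t are coprime
  have hstco : IsCoprime s t := by
    by_contra hcon
    obtain ⟨ℓ, hℓ, hℓs, hℓt⟩ := exists_common_prime_of_not_isCoprime hcon
    have hℓn2 : ¬ ℓ ∣ 2 := by
      intro h2
      have hassoc : Associated ℓ 2 := hℓ.associated_of_dvd p2Z h2
      have h2s : (2:ℤ) ∣ s := (Associated.dvd_iff_dvd_left hassoc).mp hℓs
      omega
    have hℓsum : ℓ ∣ s + t := dvd_add hℓs hℓt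
    have hℓa : ℓ ∣ a := by
      have hℓ5a : ℓ ∣ 5 * a^4 := hst ▸ hℓs.mul_right t
      rcases hℓ.dvd_mul.mp hℓ5a with h5 | ha4
      · have hassoc : Associated ℓ 5 := hℓ.associated_of_dvd p5Z h5
        have h5s : (5:ℤ) ∣ s := (Associated.dvd_iff_dvd_left hassoc).mp hℓs
        have h5t : (5:ℤ) ∣ t := (Associated.dvd_iff_dvd_left hassoc).mp hℓt
        obtain ⟨s1, hs1⟩ := h5s
        obtain ⟨t1, ht1⟩ := h5t
        have h5a4 : (5:ℤ) ∣ a ^ 4 := by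
          refine ⟨s1 * t1, ?_⟩
          have h25 : 5*(a^4) = 5*(5*(s1*t1)) := by
            rw [hs1, ht1] at hst; linear_combination -hst
          linarith
        have h5a : (5:ℤ) ∣ a := p5Z.dvd_of_dvd_pow h5a4
        exact (Associated.dvd_iff_dvd_left hassoc).mpr h5a
      · exact hℓ.dvd_of_dvd_pow ha4
    have hℓ8p : ℓ ∣ 2*(4*p^2) := by
      have h8 : 2*(4*p^2) = (s + t) + 2*a^2 := by rw [hsum2]; ring
      rw [h8]
      exact dvd_add hℓsum ((dvd_pow hℓa two_ne_zero).mul_left 2)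
    have hℓp : ℓ ∣ p := by
      rcases hℓ.dvd_mul.mp hℓ8p with h2 | h4p
      · exact absurd h2 hℓn2
      · rcases hℓ.dvd_mul.mp h4p with h4 | hp2
        · exact absurd (hℓ.dvd_of_dvd_pow (n := 2) ((by norm_num : (4:ℤ) = 2^2) ▸ h4)) hℓn2
        · exact hℓ.dvd_of_dvd_pow hp2
    exact hℓ.not_unit (hpaco.isUnit_of_dvd' hℓa hℓp)
  -- split off the factor 5 and take fourth roots
  have h5st : (5:ℤ) ∣ s * t := ⟨a^4, hst⟩
  obtain ⟨d, e, hdpos, hepos, hsumde, hae2, hdeco, hdodd, heodd⟩ :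
      ∃ d e : ℤ, 0 < d ∧ 0 < e ∧ s + t = d^4 + 5*e^4 ∧ a^2 = d^2*e^2 ∧
        IsCoprime d e ∧ d % 2 = 1 ∧ e % 2 = 1 := by
    rcases p5Z.dvd_mul.mp h5st with h5s | h5t
    · obtain ⟨d, e, hdpos, hepos, htd, hse, hae, hdeco, hdodd, heodd⟩ :=
        five_split hapos htpos hspos htodd hsodd hstco.symm (by linear_combination hst) h5s
      exact ⟨d, e, hdpos, hepos, by rw [htd, hse]; ring, hae, hdeco, hdodd, heodd⟩
    · obtain ⟨d, e, hdpos, hepos, hsd, hte, hae, hdeco, hdodd, heodd⟩ :=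
        five_split hapos hspos htpos hsodd htodd hstco hst h5t
      exact ⟨d, e, hdpos, hepos, by rw [hsd, hte], hae, hdeco, hdodd, heodd⟩
  have h2U : 2*(4*p^2 - a^2) = d^4 + 5*e^4 := by rw [← hsum2]; exact hsumde
  -- halves k and l
  obtain ⟨F, hF⟩ : ∃ F, d^2 = 8*F + 1 := by
    obtain ⟨i, hi⟩ : ∃ i, d = 2*i+1 := ⟨d/2, by omega⟩
    obtain ⟨c, hc⟩ : Even (i * (i+1)) := Int.even_mul_succ_self i
    exact ⟨c, by rw [hi]; linear_combination 4 * hc⟩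
  obtain ⟨G, hG⟩ : ∃ G, e^2 = 8*G + 1 := by
    obtain ⟨i, hi⟩ : ∃ i, e = 2*i+1 := ⟨e/2, by omega⟩
    obtain ⟨c, hc⟩ : Even (i * (i+1)) := Int.even_mul_succ_self i
    exact ⟨c, by rw [hi]; linear_combination 4 * hc⟩
  obtain ⟨k, hkdef⟩ : ∃ k : ℤ, k = 4*F + 4*G + 1 := ⟨_, rfl⟩
  obtain ⟨l, hldef⟩ : ∃ l : ℤ, l = 4*F + 20*G + 3 := ⟨_, rfl⟩
  have hk : d^2 + e^2 = 2*k := by rw [hkdef]; linarith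
  have hl : d^2 + 5*e^2 = 2*l := by rw [hldef]; linarith
  have hkpos : 0 < k := by linarith [hk, pow_pos hdpos 2, pow_pos hepos 2]
  have hlpos : 0 < l := by linarith [hl, pow_pos hdpos 2, pow_pos hepos 2]
  have h12 : 12*q^2 = (d^2+e^2)*(d^2+5*e^2) := by
    linear_combination 4*haA' + h2U + 6*hae2
  have h3kl : 3*q^2 = k * l := by
    have h4 : 12*q^2 = (2*k)*(2*l) := by rw [← hk, ← hl]; exact h12
    have h4' : 12*q^2 = 4*(k*l) := by linear_combination h4
    linarith
  -- k and l are coprime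
  have hklco : IsCoprime k l := by
    by_contra hcon
    obtain ⟨ℓ, hℓ, hℓk, hℓl⟩ := exists_common_prime_of_not_isCoprime hcon
    have hℓn2 : ¬ ℓ ∣ 2 := by
      intro h2
      have hassoc : Associated ℓ 2 := hℓ.associated_of_dvd p2Z h2
      have h2k : (2:ℤ) ∣ k := (Associated.dvd_iff_dvd_left hassoc).mp hℓk
      omega
    have hℓe : ℓ ∣ e := by
      have h4e : ℓ ∣ 2*(2*(e^2)) := by
        have hee : 2*(2*(e^2)) = 2*l - 2*k := by linarith
        rw [hee]
        exact dvd_sub (hℓl.mul_left 2) (hℓk.mul_left 2)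
      rcases hℓ.dvd_mul.mp h4e with h2 | h2e
      · exact absurd h2 hℓn2
      · rcases hℓ.dvd_mul.mp h2e with h2 | he2
        · exact absurd h2 hℓn2
        · exact hℓ.dvd_of_dvd_pow he2
    have hℓd : ℓ ∣ d := by
      have h4d : ℓ ∣ 2*(2*(d^2)) := by
        have hdd : 2*(2*(d^2)) = 10*k - 2*l := by linarith
        rw [hdd]
        exact dvd_sub (hℓk.mul_left 10) (hℓl.mul_left 2)
      rcases hℓ.dvd_mul.mp h4d with h2 | h2d
      · exact absurd h2 hℓn2
      · rcases hℓ.dvd_mul.mp h2d with h2 | hd2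
        · exact absurd h2 hℓn2
        · exact hℓ.dvd_of_dvd_pow hd2
    exact hℓ.not_unit (hdeco.isUnit_of_dvd' hℓd hℓe)
  -- 3 divides l, and k is a perfect square
  obtain ⟨r, hrpos, hkr⟩ : ∃ r : ℤ, 0 < r ∧ k = r^2 := by
    have h3kl' : (3:ℤ) ∣ k * l := ⟨q^2, h3kl.symm⟩
    rcases p3Z.dvd_mul.mp h3kl' with h3k | h3l
    · exfalso
      obtain ⟨k1, hk1⟩ := h3k
      have hq2 : l * k1 = q^2 := by
        have h3' : 3*(l*k1) = 3*(q^2) := by rw [hk1] at h3kl; linear_combination -h3kl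
        linarith
      have hk1l : IsCoprime l k1 :=
        IsCoprime.of_isCoprime_of_dvd_right hklco.symm ⟨3, by rw [hk1]; ring⟩
      obtain ⟨w, hwpos, hlw⟩ := sq_of_coprime_pos hk1l hq2 hlpos
      rcases Int.even_or_odd w with ⟨i, hi⟩ | ⟨i, hi⟩
      · have : l = 4*(i^2) := by rw [hlw, hi]; ring
        omega
      · have : l = 4*(i^2+i) + 1 := by rw [hlw, hi]; ring
        omega
    · obtain ⟨l1, hl1⟩ := h3l
      have hq2 : k * l1 = q^2 := by
        have h3' : 3*(k*l1) = 3*(q^2) := by rw [hl1] at h3kl; linear_combination -h3kl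
        linarith
      have hkl1 : IsCoprime k l1 :=
        IsCoprime.of_isCoprime_of_dvd_right hklco ⟨3, by rw [hl1]; ring⟩
      exact sq_of_coprime_pos hkl1 hq2 hkpos
  -- the final Fermat-type equation
  have e1 : 2*p^2 = k*l - d^2*e^2 := by linear_combination -haA' - hae2 + h3kl
  have e5 : 4*(2*p^2) = 4*k^2 + 4*e^4 := by
    linear_combination 4*e1 + (2*k - 4*e^2)*hk + (-(2*k))*hl
  have hfinal : r^4 + e^4 = 2*p^2 := by
    rw [hkr] at e5
    have h4 : 4*(r^4 + e^4) = 4*(2*p^2) := by linear_combination -e5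
    linarith
  -- r and e are coprime
  have hreco : IsCoprime r e := by
    by_contra hcon
    obtain ⟨ℓ, hℓ, hℓr, hℓe⟩ := exists_common_prime_of_not_isCoprime hcon
    have hℓk : ℓ ∣ k := hkr ▸ dvd_pow hℓr two_ne_zero
    have hℓd2 : ℓ ∣ d^2 := by
      have hdd : d^2 = 2*k - e^2 := by linarith
      rw [hdd]
      exact dvd_sub (hℓk.mul_left 2) (dvd_pow hℓe two_ne_zero)
    have hℓd : ℓ ∣ d := hℓ.dvd_of_dvd_pow hℓd2
    exact hℓ.not_unit (hdeco.isUnit_of_dvd' hℓd hℓe)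
  -- apply the Fermat result
  have hr2e2 : r^2 = e^2 :=
    sq_eq_sq_of_pow4_add_pow4_eq_two_mul_sq (z := p) hreco hfinal
  -- finish
  have hke : k = e^2 := by rw [hkr, hr2e2]
  have hd2e2 : d^2 = e^2 := by linarith [hk, hke]
  have hdu : IsUnit d := by
    refine (hdeco.pow_right (n := 2)).isUnit_of_dvd' dvd_rfl ⟨d, ?_⟩
    rw [← hd2e2]; ring
  have hd1 : d = 1 := by
    rw [Int.isUnit_iff] at hdu
    omega
  have he2 : e^2 = 1 := by rw [← hd2e2, hd1]; norm_num
  have hr4 : r^4 = 1 := by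
    have : r^4 = (r^2)^2 := by ring
    rw [this, hr2e2, he2]; norm_num
  have hp2 : p^2 = 1 := by
    have he4 : e^4 = 1 := by
      have : e^4 = (e^2)^2 := by ring
      rw [this, he2]; norm_num
    linarith
  have ha2 : a^2 = 1 := by rw [hae2, hd1, he2]; norm_num
  have hq2 : q^2 = 1 := by linarith [haA']
  have hq1 : q = 1 := by
    have hfq : (q - 1) * (q + 1) = 0 := by linear_combination hq2
    rcases mul_eq_zero.mp hfq with h1 | h1
    · linarith
    · linarith
  exact ⟨hq1, hp2⟩
/-- The only rational points on the affine curve `y² + y = -2x⁶ + 9x² - 7` are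
`(1, 0)`, `(-1, 0)`, `(1, -1)`, and `(-1, -1)`. -/
theorem rational_points_of_genus_two_curve_one (x y : ℚ) :
    y ^ 2 + y = -2 * x ^ 6 + 9 * x ^ 2 - 7 ↔
      (x, y) = (1, 0) ∨ (x, y) = (-1, 0) ∨ (x, y) = (1, -1) ∨ (x, y) = (-1, -1) := by
  constructor
  · intro h
    obtain ⟨p, hpdef⟩ : ∃ p : ℤ, p = x.num := ⟨_, rfl⟩
    obtain ⟨q, hqdef⟩ : ∃ q : ℤ, q = (x.den : ℤ) := ⟨_, rfl⟩
    have hq : 0 < q := by rw [hqdef]; exact_mod_cast x.pos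
    have hq0 : (q : ℚ) ≠ 0 := by
      intro h0
      rw [show ((q:ℤ):ℚ) = ((q:ℤ):ℚ) from rfl] at h0
      have : q = 0 := by exact_mod_cast h0
      omega
    have hco : IsCoprime p q := by
      rw [hpdef, hqdef, Int.isCoprime_iff_gcd_eq_one]
      have hred := x.reduced
      simpa [Int.gcd, Int.natAbs_natCast] using hred
    have hx : x = (p : ℚ) / (q : ℚ) := by
      rw [hpdef, hqdef]
      push_cast
      exact (Rat.num_div_den x).symm
    have hxq : (p : ℚ) = x * (q : ℚ) := by rw [hx]; field_simp
    have hw2 : ((2*y+1) * (q:ℚ)^3) * ((2*y+1) * (q:ℚ)^3)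
        = ((-8*p^6 + 36*p^2*q^4 - 27*q^6 : ℤ) : ℚ) := by
      push_cast
      linear_combination (4*(q:ℚ)^6) * h +
        (8*((p:ℚ)^5 + (p:ℚ)^4*(x*(q:ℚ)) + (p:ℚ)^3*(x*(q:ℚ))^2 + (p:ℚ)^2*(x*(q:ℚ))^3 +
          (p:ℚ)*(x*(q:ℚ))^4 + (x*(q:ℚ))^5) - 36*(q:ℚ)^4*((p:ℚ) + x*(q:ℚ))) * hxq
    obtain ⟨w, hwdef⟩ : ∃ w : ℚ, w = (2*y+1) * (q:ℚ)^3 := ⟨_, rfl⟩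
    rw [← hwdef] at hw2
    have hwden : w.den = 1 := by
      have h1 : (w * w).den = 1 := by rw [hw2]; exact Rat.den_intCast _
      have h2 := Rat.mul_self_den w
      rw [h1] at h2
      exact Nat.eq_one_of_mul_eq_one_left h2.symm
    obtain ⟨mz, hmz⟩ : ∃ mz : ℤ, (mz : ℚ) = w := ⟨w.num, by
      rw [← Rat.den_eq_one_iff]; exact hwden⟩
    have hmz2 : mz ^ 2 = -8*p^6 + 36*p^2*q^4 - 27*q^6 := by
      have : ((mz:ℚ))^2 = ((-8*p^6 + 36*p^2*q^4 - 27*q^6 : ℤ) : ℚ) := by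
        rw [hmz]; rw [← hw2]; ring
      exact_mod_cast this
    have hmain : mz ^ 2 = (3*q^2 - 2*p^2) * (4*p^4 + 6*p^2*q^2 - 9*q^4) := by
      linear_combination hmz2
    obtain ⟨hq1, hp2⟩ := main_int_lemma p q mz hq hco hmain
    have hp : p = 1 ∨ p = -1 := by
      have hfac : (p - 1) * (p + 1) = 0 := by linear_combination hp2
      rcases mul_eq_zero.mp hfac with h1 | h1
      · exact Or.inl (by linarith)
      · exact Or.inr (by linarith)
    rcases hp with hp1 | hpm1
    · have hx1 : x = 1 := by rw [hx, hq1, hp1]; norm_num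
      have hy : y * (y + 1) = 0 := by rw [hx1] at h; linear_combination h
      rcases mul_eq_zero.mp hy with h0 | h1
      · exact Or.inl (by rw [hx1, h0])
      · exact Or.inr (Or.inr (Or.inl (by rw [hx1, show y = -1 by linarith])))
    · have hx1 : x = -1 := by rw [hx, hq1, hpm1]; norm_num
      have hy : y * (y + 1) = 0 := by rw [hx1] at h; linear_combination h
      rcases mul_eq_zero.mp hy with h0 | h1
      · exact Or.inr (Or.inl (by rw [hx1, h0]))
      · exact Or.inr (Or.inr (Or.inr (by rw [hx1, show y = -1 by linarith])))
  · rintro (h | h | h | h) <;> simp only [Prod.mk.injEq] at h <;>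
      obtain ⟨rfl, rfl⟩ := h <;> norm_num
end

section
/- The only rational points on the plane projective quartic curve x³y + x³z + 3y³z + 3y²z² + 3yz³ = 0 are [1 : 0 : 0], [0 : 1 : 0], and [0 : 0 : 1]. Equivalently, for rational numbers x, y, z not all zero satisfying x³y + x³z + 3y³z + 3y²z² + 3yz³ = 0, at least two of x, y, z are zero. -/
namespace PQ3

/-- The Eisenstein integers `ℤ[ω]`, `ω² + ω + 1 = 0`, represented as pairs `a + b ω`. -/
@[ext]
structure Zw : Type where
  a : ℤ
  b : ℤ
  deriving DecidableEq

namespace Zw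

/-- Convert an integer to a `Zw`. -/
def ofInt (n : ℤ) : Zw := ⟨n, 0⟩

instance : Zero Zw := ⟨ofInt 0⟩

@[simp] theorem zero_a : (0 : Zw).a = 0 := rfl
@[simp] theorem zero_b : (0 : Zw).b = 0 := rfl

instance : One Zw := ⟨ofInt 1⟩

@[simp] theorem one_a : (1 : Zw).a = 1 := rfl
@[simp] theorem one_b : (1 : Zw).b = 0 := rfl

instance : Add Zw := ⟨fun z w => ⟨z.1 + w.1, z.2 + w.2⟩⟩

@[simp] theorem add_a (z w : Zw) : (z + w).a = z.a + w.a := rfl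
@[simp] theorem add_b (z w : Zw) : (z + w).b = z.b + w.b := rfl

instance : Neg Zw := ⟨fun z => ⟨-z.1, -z.2⟩⟩

@[simp] theorem neg_a (z : Zw) : (-z).a = -z.a := rfl
@[simp] theorem neg_b (z : Zw) : (-z).b = -z.b := rfl

instance : Mul Zw := ⟨fun z w => ⟨z.1 * w.1 - z.2 * w.2, z.1 * w.2 + z.2 * w.1 - z.2 * w.2⟩⟩

@[simp] theorem mul_a (z w : Zw) : (z * w).a = z.a * w.a - z.b * w.b := rfl
@[simp] theorem mul_b (z w : Zw) : (z * w).b = z.a * w.b + z.b * w.a - z.b * w.b := rfl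

instance addCommGroup : AddCommGroup Zw := by
  refine
  { add := (· + ·)
    zero := (0 : Zw)
    sub := fun a b => a + -b
    neg := Neg.neg
    nsmul := @nsmulRec Zw ⟨0⟩ ⟨(· + ·)⟩
    zsmul := @zsmulRec Zw ⟨0⟩ ⟨(· + ·)⟩ ⟨Neg.neg⟩ (@nsmulRec Zw ⟨0⟩ ⟨(· + ·)⟩)
    add_assoc := ?_
    zero_add := ?_
    add_zero := ?_
    neg_add_cancel := ?_
    add_comm := ?_ } <;>
  intros <;>
  ext <;>
  simp [add_comm, add_left_comm]

@[simp] theorem sub_a (z w : Zw) : (z - w).a = z.a - w.a := by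
  change (z + -w).a = _; simp [sub_eq_add_neg]
@[simp] theorem sub_b (z w : Zw) : (z - w).b = z.b - w.b := by
  change (z + -w).b = _; simp [sub_eq_add_neg]

instance addGroupWithOne : AddGroupWithOne Zw :=
  { Zw.addCommGroup with
    natCast := fun n => ofInt n
    intCast := ofInt
    one := 1 }

instance commRing : CommRing Zw := by
  refine
  { Zw.addGroupWithOne with
    mul := (· * ·)
    npow := @npowRec Zw ⟨1⟩ ⟨(· * ·)⟩,
    add_comm := ?_
    left_distrib := ?_
    right_distrib := ?_
    zero_mul := ?_
    mul_zero := ?_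
    mul_assoc := ?_
    one_mul := ?_
    mul_one := ?_
    mul_comm := ?_ } <;>
  intros <;>
  ext <;>
  simp <;>
  ring

instance : Nontrivial Zw := ⟨⟨0, 1, fun h => by simpa using congrArg Zw.a h⟩⟩

/-- Complex conjugation on `Zw` (sends `ω` to `ω² = -1-ω`). -/
def conj (z : Zw) : Zw := ⟨z.a - z.b, -z.b⟩

@[simp] theorem conj_a (z : Zw) : (conj z).a = z.a - z.b := rfl
@[simp] theorem conj_b (z : Zw) : (conj z).b = -z.b := rfl

/-- The norm. -/
def norm (z : Zw) : ℤ := z.a ^ 2 - z.a * z.b + z.b ^ 2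

theorem norm_mul (z w : Zw) : (z * w).norm = z.norm * w.norm := by
  simp only [norm, mul_a, mul_b]; ring

theorem norm_nonneg (z : Zw) : 0 ≤ z.norm := by
  have h := sq_nonneg (2 * z.a - z.b); have h2 := sq_nonneg z.b
  simp only [norm]; nlinarith

theorem norm_eq_zero_iff {z : Zw} : z.norm = 0 ↔ z = 0 := by
  constructor
  · intro h
    have h4 : (2 * z.a - z.b) ^ 2 + 3 * z.b ^ 2 = 0 := by
      simp only [norm] at h; nlinarith
    have hb : z.b = 0 := by nlinarith [sq_nonneg (2 * z.a - z.b), sq_nonneg z.b]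
    have ha : z.a = 0 := by
      simp only [norm, hb] at h; nlinarith
    ext <;> simp [ha, hb]
  · rintro rfl; simp [norm]

theorem norm_pos_of_ne_zero {z : Zw} (h : z ≠ 0) : 0 < z.norm :=
  lt_of_le_of_ne (norm_nonneg z) (fun hc => h (norm_eq_zero_iff.mp hc.symm))

theorem mul_conj (z : Zw) : z * conj z = ofInt z.norm := by
  ext <;> simp [conj, norm, ofInt] <;> ring

theorem norm_dvd_of_dvd {z w : Zw} (h : z ∣ w) : z.norm ∣ w.norm := by
  obtain ⟨c, rfl⟩ := h; exact ⟨c.norm, norm_mul z c⟩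

/-- rounding division of integers: `divAux c n` is a nearest integer to `c / n`. -/
def divAux (c n : ℤ) : ℤ := (2 * c + n) / (2 * n)

theorem divAux_bound {c n : ℤ} (hn : 0 < n) :
    -n ≤ 2 * (c - n * divAux c n) ∧ 2 * (c - n * divAux c n) < n := by
  have h2n : (0:ℤ) < 2 * n := by omega
  have hdm := Int.mul_ediv_add_emod (2 * c + n) (2 * n)
  have hr0 : 0 ≤ (2 * c + n) % (2 * n) := Int.emod_nonneg _ (by omega)
  have hr1 : (2 * c + n) % (2 * n) < 2 * n := Int.emod_lt_of_pos _ h2n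
  unfold divAux
  have hq : 2 * n * ((2 * c + n) / (2 * n)) = 2 * (n * ((2 * c + n) / (2 * n))) := by ring
  omega

instance : Div Zw :=
  ⟨fun x y => ⟨divAux (x * conj y).a y.norm, divAux (x * conj y).b y.norm⟩⟩

theorem div_def (x y : Zw) :
    x / y = ⟨divAux (x * conj y).a y.norm, divAux (x * conj y).b y.norm⟩ := rfl

instance : Mod Zw := ⟨fun x y => x - y * (x / y)⟩

theorem mod_def (x y : Zw) : x % y = x - y * (x / y) := rfl

theorem div_lemma {n R e1 e2 : ℤ} (hn : 0 < n)
    (h1l : -n ≤ 2 * e1) (h1r : 2 * e1 < n) (h2l : -n ≤ 2 * e2) (h2r : 2 * e2 < n)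
    (hkey : R * n = e1 ^ 2 - e1 * e2 + e2 ^ 2) : R < n := by
  have hb1 : (2 * e1) ^ 2 ≤ n ^ 2 := by nlinarith
  have hb2 : (2 * e2) ^ 2 ≤ n ^ 2 := by nlinarith
  have hE : 4 * (e1 ^ 2 - e1 * e2 + e2 ^ 2) ≤ 3 * n ^ 2 := by
    nlinarith [sq_nonneg (2 * e1 - 2 * e2), sq_nonneg (2 * e1 + 2 * e2)]
  nlinarith [mul_pos hn hn]

theorem norm_mod_lt (x : Zw) {y : Zw} (hy : y ≠ 0) : (x % y).norm < y.norm := by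
  have hn : 0 < y.norm := norm_pos_of_ne_zero hy
  obtain ⟨h1l, h1r⟩ := divAux_bound (c := (x * conj y).a) hn
  obtain ⟨h2l, h2r⟩ := divAux_bound (c := (x * conj y).b) hn
  refine div_lemma hn h1l h1r h2l h2r ?_
  show (x - y * ⟨divAux (x * conj y).a y.norm, divAux (x * conj y).b y.norm⟩).norm * y.norm = _
  simp only [norm, sub_a, sub_b, mul_a, mul_b, conj_a, conj_b]
  ring

instance euclideanDomain : EuclideanDomain Zw :=
  { Zw.commRing, (inferInstance : Nontrivial Zw) with
    quotient := (· / ·)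
    remainder := (· % ·)
    quotient_zero := fun a => by
      show a / 0 = 0
      rw [div_def]
      ext <;> simp [divAux, norm]
    quotient_mul_add_remainder_eq := fun a b => by
      show b * (a / b) + (a - b * (a / b)) = a
      ring
    r := fun x y => x.norm.natAbs < y.norm.natAbs
    r_wellFounded := InvImage.wf (fun x : Zw => x.norm.natAbs) (Nat.lt_wfRel.wf)
    remainder_lt := fun a b hb => by
      have h := norm_mod_lt a hb
      have h1 := norm_nonneg (a % b)
      have h2 := norm_nonneg b
      show (a % b).norm.natAbs < b.norm.natAbs
      omega
    mul_left_not_lt := fun a {b} hb => by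
      have hbpos : 0 < b.norm := norm_pos_of_ne_zero hb
      have ha := norm_nonneg a
      have h1 : a.norm ≤ (a * b).norm := by
        rw [norm_mul]; nlinarith
      show ¬ (a * b).norm.natAbs < a.norm.natAbs
      omega }


theorem norm_one : (1 : Zw).norm = 1 := by simp [norm]

theorem isUnit_iff_norm_eq_one {z : Zw} : IsUnit z ↔ z.norm = 1 := by
  constructor
  · rintro ⟨u, rfl⟩
    have h : (u : Zw) * ↑u⁻¹ = 1 := u.mul_inv
    have h2 : (u : Zw).norm * ((u⁻¹ : Zwˣ) : Zw).norm = 1 := by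
      rw [← norm_mul, h, norm_one]
    exact Int.eq_one_of_mul_eq_one_right (norm_nonneg _) h2
  · intro h
    exact IsUnit.of_mul_eq_one (conj z) (by rw [mul_conj, h]; rfl)

theorem unit_cases {z : Zw} (h : IsUnit z) :
    z = ⟨1, 0⟩ ∨ z = ⟨-1, 0⟩ ∨ z = ⟨0, 1⟩ ∨ z = ⟨0, -1⟩ ∨ z = ⟨1, 1⟩ ∨ z = ⟨-1, -1⟩ := by
  have hn : z.a ^ 2 - z.a * z.b + z.b ^ 2 = 1 := isUnit_iff_norm_eq_one.mp h
  set p := z.a with hp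
  set q := z.b with hq
  have h4 : (2 * p - q) ^ 2 + 3 * q ^ 2 = 4 := by linear_combination 4 * hn
  have hqb : q ^ 2 ≤ 1 := by nlinarith [sq_nonneg (2 * p - q)]
  have hq1 : -1 ≤ q := by nlinarith
  have hq2 : q ≤ 1 := by nlinarith
  have hzz : z = (⟨p, q⟩ : Zw) := by ext <;> rfl
  interval_cases q
  · -- q = -1
    have : p * (p + 1) = 0 := by linear_combination hn
    rcases mul_eq_zero.mp this with h' | h'
    · right; right; right; left; rw [hzz, h']
    · right; right; right; right; right
      rw [hzz, show p = -1 by omega]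
  · -- q = 0
    have : (p - 1) * (p + 1) = 0 := by linear_combination hn
    rcases mul_eq_zero.mp this with h' | h'
    · left; rw [hzz, show p = 1 by omega]
    · right; left; rw [hzz, show p = -1 by omega]
  · -- q = 1
    have : p * (p - 1) = 0 := by linear_combination hn
    rcases mul_eq_zero.mp this with h' | h'
    · right; right; left; rw [hzz, h']
    · right; right; right; right; left
      rw [hzz, show p = 1 by omega]

theorem ofInt_dvd {n : ℤ} {x : Zw} : ofInt n ∣ x ↔ n ∣ x.a ∧ n ∣ x.b := by
  constructor
  · rintro ⟨c, rfl⟩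
    constructor
    · exact ⟨c.a, by simp [ofInt]⟩
    · exact ⟨c.b, by simp [ofInt]⟩
  · rintro ⟨⟨a', ha⟩, ⟨b', hb⟩⟩
    exact ⟨⟨a', b'⟩, by ext <;> simp [ofInt, ha, hb]⟩

theorem ofInt_mul_mk (d p q : ℤ) : ofInt d * (⟨p, q⟩ : Zw) = ⟨d * p, d * q⟩ := by
  ext <;> simp [ofInt]

theorem cube_mk (p q : ℤ) :
    (⟨p, q⟩ : Zw) ^ 3 = ⟨p ^ 3 - 3 * p * q ^ 2 + q ^ 3, 3 * p ^ 2 * q - 3 * p * q ^ 2⟩ := by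
  rw [pow_succ, pow_succ, pow_one]
  ext <;> simp <;> ring

theorem cube_ofInt (n : ℤ) : (ofInt n) ^ 3 = ofInt (n ^ 3) := by
  show ((⟨n, 0⟩ : Zw)) ^ 3 = _
  rw [cube_mk]; ext <;> simp [ofInt] <;> ring

/-- `λ = 1 - ω`. -/
def lam : Zw := ⟨1, -1⟩

theorem norm_lam : lam.norm = 3 := by norm_num [norm, lam]

theorem irreducible_lam : Irreducible lam := by
  constructor
  · rw [isUnit_iff_norm_eq_one, norm_lam]; norm_num
  · intro u v huv
    have h3 : u.norm * v.norm = 3 := by rw [← norm_mul, ← huv, norm_lam]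
    have hd : u.norm ∣ 3 := ⟨v.norm, h3.symm⟩
    have hd' : u.norm.natAbs ∣ 3 := by
      have := Int.natAbs_dvd_natAbs.mpr hd
      simpa using this
    rcases (Nat.prime_three).eq_one_or_self_of_dvd _ hd' with h1 | h1
    · left
      rw [isUnit_iff_norm_eq_one]
      have := Int.natAbs_of_nonneg (norm_nonneg u)
      omega
    · right
      rw [isUnit_iff_norm_eq_one]
      have hu3 : u.norm = 3 := by
        have := Int.natAbs_of_nonneg (norm_nonneg u)
        omega
      have : (3 : ℤ) * v.norm = 3 * 1 := by rw [← hu3]; linarith [h3]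
      exact mul_left_cancel₀ (by norm_num) this


instance : GCDMonoid Zw := EuclideanDomain.gcdMonoid Zw

end Zw

/-! ### Integer helper lemmas -/

theorem cube_inj {a b : ℤ} (h : a ^ 3 = b ^ 3) : a = b := by
  have h0 : (a - b) * (a ^ 2 + a * b + b ^ 2) = 0 := by linear_combination h
  rcases mul_eq_zero.mp h0 with h' | h'
  · linarith
  · have hb2 : b ^ 2 ≤ 0 := by nlinarith [sq_nonneg (2 * a + b)]
    have hb : b = 0 := by nlinarith [sq_nonneg b]
    have ha : a = 0 := by nlinarith [sq_nonneg a]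
    rw [ha, hb]

theorem fermat3 (n : ℤ) : (3 : ℤ) ∣ n ^ 3 - n := by
  have h : ((n ^ 3 - n : ℤ) : ZMod 3) = 0 := by
    push_cast
    have h2 : ∀ a : ZMod 3, a ^ 3 - a = 0 := by decide
    exact h2 n
  exact_mod_cast (ZMod.intCast_zmod_eq_zero_iff_dvd _ 3).mp h

theorem cube_of_coprime {a b k : ℤ} (h : IsCoprime a b) (heq : a * b = k ^ 3) :
    ∃ r : ℤ, a = r ^ 3 := by
  have hu : IsUnit (gcd a b) := h.isUnit_of_dvd' (gcd_dvd_left a b) (gcd_dvd_right a b)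
  obtain ⟨d, hd⟩ := exists_associated_pow_of_mul_eq_pow hu heq
  obtain ⟨u, hu'⟩ := hd
  rcases Int.units_eq_one_or u with rfl | rfl
  · exact ⟨d, by simpa using hu'.symm⟩
  · exact ⟨-d, by rw [← hu']; push_cast; ring⟩

theorem three_not_dvd_both {X Y : ℤ} (h : IsCoprime X Y) (h1 : (3:ℤ) ∣ X) (h2 : (3:ℤ) ∣ Y) :
    False := by
  have := h.isUnit_of_dvd' h1 h2
  rw [Int.isUnit_iff] at this
  omega

theorem descent_contra {p q T : ℤ} (hco : IsCoprime p q) (h9 : 9 ∣ p ^ 3 + q ^ 3 - 3 * T)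
    (hT : (3:ℤ) ∣ T → (3:ℤ) ∣ p + q → False) : False := by
  obtain ⟨c, hc⟩ := h9
  have h3cube : (3:ℤ) ∣ p ^ 3 + q ^ 3 := ⟨3 * c + T, by linarith⟩
  have h3sum : (3:ℤ) ∣ p + q := by
    obtain ⟨c1, hc1⟩ := fermat3 p
    obtain ⟨c2, hc2⟩ := fermat3 q
    obtain ⟨c3, hc3⟩ := h3cube
    exact ⟨c3 - c1 - c2, by linarith⟩
  obtain ⟨w, hw⟩ := h3sum
  have h9sum : (9:ℤ) ∣ p ^ 3 + q ^ 3 :=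
    ⟨3 * w ^ 3 - p * q * w, by
      linear_combination ((p + q) ^ 2 + 3 * w * (p + q) + 9 * w ^ 2 - 3 * p * q) * hw⟩
  obtain ⟨s, hs⟩ := h9sum
  exact hT ⟨s - c, by linarith⟩ ⟨w, hw⟩

theorem L1 {p q : ℤ} (hco : IsCoprime p q) (h9 : 9 ∣ p ^ 3 + q ^ 3 - 3 * (p ^ 2 * q)) :
    False := by
  refine descent_contra hco h9 (fun h3T h3s => ?_)
  rcases (Int.prime_three.dvd_mul.mp h3T) with h' | h'
  · have hp : (3:ℤ) ∣ p := Int.prime_three.dvd_of_dvd_pow h'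
    have hq : (3:ℤ) ∣ q := by omega
    exact three_not_dvd_both hco hp hq
  · have hp : (3:ℤ) ∣ p := by omega
    exact three_not_dvd_both hco hp h'

theorem L2 {p q : ℤ} (hco : IsCoprime p q) (h9 : 9 ∣ p ^ 3 - 3 * p * q ^ 2 + q ^ 3) :
    False := by
  have h9' : 9 ∣ p ^ 3 + q ^ 3 - 3 * (p * q ^ 2) := by
    obtain ⟨c, hc⟩ := h9; exact ⟨c, by linarith⟩
  refine descent_contra hco h9' (fun h3T h3s => ?_)
  rcases (Int.prime_three.dvd_mul.mp h3T) with h' | h'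
  · have hq : (3:ℤ) ∣ q := by omega
    exact three_not_dvd_both hco h' hq
  · have hq : (3:ℤ) ∣ q := Int.prime_three.dvd_of_dvd_pow h'
    have hp : (3:ℤ) ∣ p := by omega
    exact three_not_dvd_both hco hp hq

/-! ### The key parametrization via `Zw` -/

open Zw in
theorem param_aux {y z t : ℤ} (hco : IsCoprime y z) (h3t : ¬ (3:ℤ) ∣ t)
    (hQ : y ^ 2 + y * z + z ^ 2 = t ^ 3) :
    ∃ (p q : ℤ) (u : Zw), IsCoprime p q ∧ IsUnit u ∧
      (⟨p, q⟩ : Zw) ^ 3 * u = (⟨y, -z⟩ : Zw) := by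
  obtain ⟨uy, vz, hbez⟩ := hco
  have hprod : (⟨y, -z⟩ : Zw) * (⟨y + z, z⟩ : Zw) = (⟨t, 0⟩ : Zw) ^ 3 := by
    rw [cube_mk]
    ext
    · show y * (y + z) - -z * z = t ^ 3 - 3 * t * 0 ^ 2 + 0 ^ 3
      linear_combination hQ
    · show y * z + -z * (y + z) - -z * z = 3 * t ^ 2 * 0 - 3 * t * 0 ^ 2
      ring
  have hlam_not : ¬ Zw.lam ∣ (⟨y, -z⟩ : Zw) := by
    intro hdvd
    have hnd := Zw.norm_dvd_of_dvd hdvd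
    rw [Zw.norm_lam] at hnd
    have hnα : (⟨y, -z⟩ : Zw).norm = t ^ 3 := by
      show y ^ 2 - y * (-z) + (-z) ^ 2 = t ^ 3
      linear_combination hQ
    rw [hnα] at hnd
    exact h3t (Int.prime_three.dvd_of_dvd_pow hnd)
  have hgcd : IsUnit (gcd (⟨y, -z⟩ : Zw) (⟨y + z, z⟩ : Zw)) := by
    have hdα : gcd (⟨y, -z⟩ : Zw) (⟨y + z, z⟩ : Zw) ∣ ⟨y, -z⟩ := gcd_dvd_left _ _
    have hdβ : gcd (⟨y, -z⟩ : Zw) (⟨y + z, z⟩ : Zw) ∣ ⟨y + z, z⟩ := gcd_dvd_right _ _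
    set d := gcd (⟨y, -z⟩ : Zw) (⟨y + z, z⟩ : Zw) with hd
    have h1 : d ∣ (⟨-1, -2⟩ : Zw) * ⟨z, 0⟩ := by
      have he : (⟨y, -z⟩ : Zw) - ⟨y + z, z⟩ = (⟨-1, -2⟩ : Zw) * ⟨z, 0⟩ := by
        ext <;> simp <;> ring
      rw [← he]; exact dvd_sub hdα hdβ
    have h2 : d ∣ (⟨-1, -2⟩ : Zw) * ⟨y, 0⟩ := by
      have he : (⟨-1, -1⟩ : Zw) * ⟨y, -z⟩ - (⟨0, 1⟩ : Zw) * ⟨y + z, z⟩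
          = (⟨-1, -2⟩ : Zw) * ⟨y, 0⟩ := by
        ext <;> simp <;> ring
      rw [← he]; exact dvd_sub (hdα.mul_left _) (hdβ.mul_left _)
    have hdl : d ∣ (⟨-1, -2⟩ : Zw) := by
      have hone : (⟨uy * y + vz * z, 0⟩ : Zw) = ⟨1, 0⟩ := by rw [hbez]
      have hcomb : (⟨-1, -2⟩ : Zw) =
          (⟨uy, 0⟩ : Zw) * ((⟨-1, -2⟩ : Zw) * ⟨y, 0⟩) +
          (⟨vz, 0⟩ : Zw) * ((⟨-1, -2⟩ : Zw) * ⟨z, 0⟩) := by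
        calc (⟨-1, -2⟩ : Zw) = (⟨-1, -2⟩ : Zw) * ⟨uy * y + vz * z, 0⟩ := by
              rw [hone]; ext <;> simp
          _ = _ := by ext <;> simp <;> ring
      rw [hcomb]
      exact dvd_add (h2.mul_left _) (h1.mul_left _)
    have hdlam : d ∣ Zw.lam := by
      have he : Zw.lam = (⟨-1, -2⟩ : Zw) * ⟨1, 1⟩ := by ext <;> simp [Zw.lam]
      rw [he]; exact hdl.mul_right _
    obtain ⟨c, hc⟩ := hdlam
    rcases Zw.irreducible_lam.isUnit_or_isUnit hc with h | h
    · exact h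
    · exfalso
      apply hlam_not
      obtain ⟨cu, rfl⟩ := h
      have hld : Zw.lam ∣ d := ⟨↑cu⁻¹, by rw [hc, mul_assoc]; simp⟩
      exact hld.trans hdα
  obtain ⟨δ, hδ⟩ := exists_associated_pow_of_mul_eq_pow hgcd hprod
  obtain ⟨u, hu⟩ := hδ
  have hδmk : δ = (⟨δ.a, δ.b⟩ : Zw) := by ext <;> rfl
  have hpq : IsCoprime δ.a δ.b := by
    rw [Int.isCoprime_iff_gcd_eq_one]
    have hdp : (Int.gcd δ.a δ.b : ℤ) ∣ δ.a := Int.gcd_dvd_left _ _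
    have hdq : (Int.gcd δ.a δ.b : ℤ) ∣ δ.b := Int.gcd_dvd_right _ _
    have hdδ : Zw.ofInt (Int.gcd δ.a δ.b : ℤ) ∣ δ := Zw.ofInt_dvd.mpr ⟨hdp, hdq⟩
    have h3 : Zw.ofInt ((Int.gcd δ.a δ.b : ℤ) ^ 3) ∣ (⟨y, -z⟩ : Zw) := by
      rw [← Zw.cube_ofInt]
      exact dvd_trans (pow_dvd_pow_of_dvd hdδ 3) ⟨↑u, hu.symm⟩
    obtain ⟨hy3, hz3⟩ := Zw.ofInt_dvd.mp h3
    have hdy : (Int.gcd δ.a δ.b : ℤ) ∣ y :=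
      dvd_trans (dvd_pow_self _ three_ne_zero) hy3
    have hdz : (Int.gcd δ.a δ.b : ℤ) ∣ z := by
      have := dvd_trans (dvd_pow_self (Int.gcd δ.a δ.b : ℤ) three_ne_zero) hz3
      exact (dvd_neg.mp this)
    have hone : (Int.gcd δ.a δ.b : ℤ) ∣ 1 := by
      rw [← hbez]
      exact dvd_add (hdy.mul_left _) (hdz.mul_left _)
    have := Int.eq_one_of_dvd_one (by positivity) hone
    exact_mod_cast this
  exact ⟨δ.a, δ.b, ↑u, hpq, u.isUnit, by rw [← hδmk]; exact hu⟩

open Zw in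
theorem P1 {y z t : ℤ} (hco : IsCoprime y z) (h3y : (3:ℤ) ∣ y) (h3z : ¬ (3:ℤ) ∣ z)
    (h3t : ¬ (3:ℤ) ∣ t) (hQ : y ^ 2 + y * z + z ^ 2 = t ^ 3) :
    ∃ p q : ℤ, IsCoprime p q ∧
      (y = 3 * (p * q * (p - q)) ∨ y = -(3 * (p * q * (p - q)))) := by
  obtain ⟨p, q, u, hpq, hu, heq⟩ := param_aux hco h3t hQ
  rw [cube_mk] at heq
  rcases Zw.unit_cases hu with hc | hc | hc | hc | hc | hc <;> rw [hc] at heq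
  · -- u = 1 : -z = B, so 3 ∣ z
    have hb := congrArg Zw.b heq
    simp at hb
    exact absurd ⟨p * q ^ 2 - p ^ 2 * q, by linarith⟩ h3z
  · have hb := congrArg Zw.b heq
    simp at hb
    exact absurd ⟨p ^ 2 * q - p * q ^ 2, by linarith⟩ h3z
  · -- u = ω : y = -B
    have ha := congrArg Zw.a heq
    simp at ha
    exact ⟨p, q, hpq, Or.inr (by linear_combination -ha)⟩
  · -- u = -ω : y = B
    have ha := congrArg Zw.a heq
    simp at ha
    exact ⟨p, q, hpq, Or.inl (by linear_combination -ha)⟩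
  · -- u = -ω² = ⟨1,1⟩ : y = A - B, -z = A
    have ha := congrArg Zw.a heq
    have hb := congrArg Zw.b heq
    simp at ha hb
    obtain ⟨m, hm⟩ := h3y
    exact absurd ⟨p * q ^ 2 - p ^ 2 * q - m, by linarith⟩ h3z
  · -- u = ω² = ⟨-1,-1⟩ : y = B - A, -z = -A
    have ha := congrArg Zw.a heq
    have hb := congrArg Zw.b heq
    simp at ha hb
    obtain ⟨m, hm⟩ := h3y
    exact absurd ⟨p ^ 2 * q - p * q ^ 2 - m, by linarith⟩ h3z

open Zw in
theorem P2 {X Y e : ℤ} (hco : IsCoprime X Y) (h27 : (27:ℤ) ∣ X + Y) (h3e : ¬ (3:ℤ) ∣ e)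
    (hQ : X ^ 2 - X * Y + Y ^ 2 = 3 * e ^ 3) :
    ∃ p q : ℤ, IsCoprime p q ∧
      (X + Y = 9 * (p * q * (p - q)) ∨ X + Y = -(9 * (p * q * (p - q)))) := by
  obtain ⟨k, hk⟩ := h27
  set V : ℤ := 9 * k with hVdef
  have hY : Y = 3 * V - X := by rw [hVdef]; linarith
  subst hY
  obtain ⟨uc, vc, hbez⟩ := hco
  have hco2 : IsCoprime (X - V) (-V) := by
    apply IsCoprime.neg_right
    exact ⟨uc - vc, uc + 2 * vc, by linear_combination hbez⟩
  have hQ2 : (X - V) ^ 2 + (X - V) * (-V) + (-V) ^ 2 = e ^ 3 := by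
    apply mul_left_cancel₀ (show (3:ℤ) ≠ 0 by norm_num)
    linear_combination hQ
  obtain ⟨p, q, u, hpq, hu, heq⟩ := param_aux hco2 h3e hQ2
  rw [cube_mk] at heq
  have hVk : V = 9 * k := hVdef
  rcases Zw.unit_cases hu with hc | hc | hc | hc | hc | hc <;> rw [hc] at heq <;>
    [skip; skip; skip; skip; skip; skip]
  · -- u = 1 : V = B
    have hb := congrArg Zw.b heq
    simp at hb
    exact ⟨p, q, hpq, Or.inl (by linear_combination -3 * hb)⟩
  · -- u = -1 : V = -B
    have hb := congrArg Zw.b heq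
    simp at hb
    exact ⟨p, q, hpq, Or.inr (by linear_combination -3 * hb)⟩
  · -- u = ω : V = A - B, 9 ∣ A - B
    have hb := congrArg Zw.b heq
    simp at hb
    exact absurd (L1 hpq ⟨k, by linarith⟩) (fun h => h)
  · -- u = -ω : V = B - A
    have hb := congrArg Zw.b heq
    simp at hb
    exact absurd (L1 hpq ⟨-k, by linarith⟩) (fun h => h)
  · -- u = -ω² = ⟨1,1⟩ : V = A
    have hb := congrArg Zw.b heq
    simp at hb
    exact absurd (L2 hpq ⟨k, by linarith⟩) (fun h => h)
  · -- u = ω² = ⟨-1,-1⟩ : V = -A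
    have hb := congrArg Zw.b heq
    simp at hb
    exact absurd (L2 hpq ⟨-k, by linarith⟩) (fun h => h)

theorem pow_ne_zero_of_ne {r : ℤ} {v : ℤ} (h : r ^ 3 = v) (hv : v ≠ 0) : r ≠ 0 := by
  rintro rfl; simp at h; exact hv h.symm

theorem coprime_of_cube {A B r s : ℤ} (h : IsCoprime A B) (hA : A = r ^ 3) (hB : B = s ^ 3) :
    IsCoprime r s := by
  rw [hA, hB] at h
  exact (IsCoprime.pow_left_iff (by norm_num)).mp
    ((IsCoprime.pow_right_iff (by norm_num)).mp h)

theorem arrangement {p q k : ℤ} (hpq : IsCoprime p q) (hk : k ≠ 0)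
    (heq : p * q * (p - q) = 3 * k ^ 3) :
    ∃ X Y Z : ℤ, IsCoprime X Y ∧ X ≠ 0 ∧ Y ≠ 0 ∧ Z ≠ 0 ∧ Z ∣ k ∧
      X ^ 3 + Y ^ 3 = 3 * Z ^ 3 := by
  have hk3 : (3:ℤ) * k ^ 3 ≠ 0 := by
    intro h
    apply hk
    have h2 : k ^ 3 = 0 := by linarith
    exact pow_eq_zero_iff three_ne_zero |>.mp h2
  have hp0 : p ≠ 0 := by rintro rfl; rw [← heq] at hk3; simp at hk3
  have hq0 : q ≠ 0 := by rintro rfl; rw [← heq] at hk3; simp at hk3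
  have hpq0 : p - q ≠ 0 := by
    intro h; rw [← heq, h] at hk3; simp at hk3
  have hcp_pq : IsCoprime p (p - q) := by
    have h := hpq.neg_right.add_mul_left_right 1
    rwa [show -q + p * 1 = p - q by ring] at h
  have hcq_pq : IsCoprime q (p - q) := by
    have h := hpq.symm.add_mul_left_right (-1)
    rwa [show p + q * (-1) = p - q by ring] at h
  have h3d : (3:ℤ) ∣ p * q * (p - q) := ⟨k ^ 3, heq⟩
  rcases Int.prime_three.dvd_mul.mp h3d with h3 | h3
  · rcases Int.prime_three.dvd_mul.mp h3 with h3 | h3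
    · -- 3 ∣ p : p = 3P, q = be³, p - q = de³, P = al³, be³ + de³ = 3al³
      obtain ⟨P, hP⟩ := h3
      have hPk : P * (q * (p - q)) = k ^ 3 := by
        apply mul_left_cancel₀ (show (3:ℤ) ≠ 0 by norm_num)
        rw [← heq, hP]; ring
      have hcoP_q : IsCoprime P q := hpq.of_isCoprime_of_dvd_left ⟨3, by rw [hP]; ring⟩
      have hcoP_pq : IsCoprime P (p - q) := hcp_pq.of_isCoprime_of_dvd_left ⟨3, by rw [hP]; ring⟩
      obtain ⟨al, hal⟩ := cube_of_coprime (hcoP_q.mul_right hcoP_pq) hPk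
      obtain ⟨be, hbe⟩ := cube_of_coprime
        (hcoP_q.symm.mul_right hcq_pq) (show q * (P * (p - q)) = k ^ 3 by linear_combination hPk)
      obtain ⟨de, hde⟩ := cube_of_coprime
        (hcoP_pq.symm.mul_right hcq_pq.symm)
        (show (p - q) * (P * q) = k ^ 3 by linear_combination hPk)
      refine ⟨be, de, al, coprime_of_cube hcq_pq hbe hde,
        pow_ne_zero_of_ne hbe.symm hq0, pow_ne_zero_of_ne hde.symm hpq0, ?_, ?_, ?_⟩
      · refine pow_ne_zero_of_ne hal.symm ?_
        rintro rfl; rw [mul_zero] at hP; exact hp0 hP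
      · have hcube : (al * be * de) ^ 3 = k ^ 3 := by
          rw [mul_pow, mul_pow, ← hal, ← hbe, ← hde, ← hPk]; ring
        exact ⟨be * de, by rw [← cube_inj hcube]; ring⟩
      · linear_combination -hbe - hde + 3 * hal + hP
    · -- 3 ∣ q : q = 3Q', p = be³, p - q = de³, Q' = al³, be³ - de³ = 3al³
      obtain ⟨Q', hq3⟩ := h3
      have hPk : Q' * (p * (p - q)) = k ^ 3 := by
        apply mul_left_cancel₀ (show (3:ℤ) ≠ 0 by norm_num)
        rw [← heq, hq3]; ring
      have hcoQ_p : IsCoprime Q' p := hpq.symm.of_isCoprime_of_dvd_left ⟨3, by rw [hq3]; ring⟩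
      have hcoQ_pq : IsCoprime Q' (p - q) := hcq_pq.of_isCoprime_of_dvd_left ⟨3, by rw [hq3]; ring⟩
      obtain ⟨al, hal⟩ := cube_of_coprime (hcoQ_p.mul_right hcoQ_pq) hPk
      obtain ⟨be, hbe⟩ := cube_of_coprime
        (hcoQ_p.symm.mul_right hcp_pq) (show p * (Q' * (p - q)) = k ^ 3 by linear_combination hPk)
      obtain ⟨de, hde⟩ := cube_of_coprime
        (hcoQ_pq.symm.mul_right hcp_pq.symm)
        (show (p - q) * (Q' * p) = k ^ 3 by linear_combination hPk)
      refine ⟨be, -de, al, (coprime_of_cube hcp_pq hbe hde).neg_right,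
        pow_ne_zero_of_ne hbe.symm hp0, neg_ne_zero.mpr (pow_ne_zero_of_ne hde.symm hpq0),
        ?_, ?_, ?_⟩
      · refine pow_ne_zero_of_ne hal.symm ?_
        rintro rfl; rw [mul_zero] at hq3; exact hq0 hq3
      · have hcube : (al * be * de) ^ 3 = k ^ 3 := by
          rw [mul_pow, mul_pow, ← hal, ← hbe, ← hde, ← hPk]; ring
        exact ⟨be * de, by rw [← cube_inj hcube]; ring⟩
      · linear_combination -hbe + hde + 3 * hal + hq3
  · -- 3 ∣ p - q : p - q = 3D, p = be³, q = de³, D = al³, be³ - de³ = 3al³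
    obtain ⟨D, hd3⟩ := h3
    have hPk : D * (p * q) = k ^ 3 := by
      apply mul_left_cancel₀ (show (3:ℤ) ≠ 0 by norm_num)
      rw [← heq, hd3]; ring
    have hcoD_p : IsCoprime D p := hcp_pq.symm.of_isCoprime_of_dvd_left ⟨3, by rw [hd3]; ring⟩
    have hcoD_q : IsCoprime D q := hcq_pq.symm.of_isCoprime_of_dvd_left ⟨3, by rw [hd3]; ring⟩
    obtain ⟨al, hal⟩ := cube_of_coprime (hcoD_p.mul_right hcoD_q) hPk
    obtain ⟨be, hbe⟩ := cube_of_coprime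
      (hcoD_p.symm.mul_right hpq) (show p * (D * q) = k ^ 3 by linear_combination hPk)
    obtain ⟨de, hde⟩ := cube_of_coprime
      (hcoD_q.symm.mul_right hpq.symm) (show q * (D * p) = k ^ 3 by linear_combination hPk)
    refine ⟨be, -de, al, (coprime_of_cube hpq hbe hde).neg_right,
      pow_ne_zero_of_ne hbe.symm hp0, neg_ne_zero.mpr (pow_ne_zero_of_ne hde.symm hq0),
      ?_, ?_, ?_⟩
    · refine pow_ne_zero_of_ne hal.symm ?_
      rintro rfl; rw [mul_zero] at hd3; exact hpq0 hd3
    · have hcube : (al * be * de) ^ 3 = k ^ 3 := by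
        rw [mul_pow, mul_pow, ← hal, ← hbe, ← hde, ← hPk]; ring
      exact ⟨be * de, by rw [← cube_inj hcube]; ring⟩
    · linear_combination -hbe + hde + 3 * hal + hd3

theorem no_cube_sum : ∀ n : ℕ, ∀ X Y Z : ℤ, Z.natAbs ≤ n → IsCoprime X Y →
    X ≠ 0 → Y ≠ 0 → Z ≠ 0 → X ^ 3 + Y ^ 3 = 3 * Z ^ 3 → False := by
  intro n
  induction n using Nat.strong_induction_on with
  | _ n ih =>
    intro X Y Z hZn hco hX hY hZ heq
    have h3XY : (3:ℤ) ∣ X + Y := by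
      obtain ⟨c1, hc1⟩ := fermat3 X
      obtain ⟨c2, hc2⟩ := fermat3 Y
      exact ⟨Z ^ 3 - c1 - c2, by linarith⟩
    have hXYne : X + Y ≠ 0 := by
      intro h0
      have hx : X = -Y := by linarith
      rw [hx] at heq
      have h1 : (0:ℤ) = 3 * Z ^ 3 := by linear_combination heq
      have h2 : Z ^ 3 = 0 := by linarith
      exact hZ (pow_eq_zero_iff three_ne_zero |>.mp h2)
    obtain ⟨V, hV⟩ := h3XY
    have h3X : ¬ (3:ℤ) ∣ X := fun h => three_not_dvd_both hco h (by omega)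
    have h3Y : ¬ (3:ℤ) ∣ Y := fun h => three_not_dvd_both hco (by omega) h
    have hQR : X ^ 2 - X * Y + Y ^ 2 = 3 * (3 * V ^ 2 - X * Y) := by
      linear_combination (X + Y + 3 * V) * hV
    have h3R : ¬ (3:ℤ) ∣ 3 * V ^ 2 - X * Y := by
      intro hd
      obtain ⟨r, hr⟩ := hd
      have hxy : (3:ℤ) ∣ X * Y := ⟨V ^ 2 - r, by linarith⟩
      rcases Int.prime_three.dvd_mul.mp hxy with h | h
      exacts [h3X h, h3Y h]
    have hZR : (X + Y) * (3 * V ^ 2 - X * Y) = Z ^ 3 := by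
      apply mul_left_cancel₀ (show (3:ℤ) ≠ 0 by norm_num)
      linear_combination -(X + Y) * hQR + heq
    have hcoXY_X : IsCoprime (X + Y) X := by
      have h := hco.symm.add_mul_left_left 1
      rwa [show Y + X * 1 = X + Y by ring] at h
    have hcoXY_Y : IsCoprime (X + Y) Y := by
      have h := hco.add_mul_left_left 1
      rwa [show X + Y * 1 = X + Y by ring] at h
    have hcoXYR : IsCoprime (X + Y) (3 * V ^ 2 - X * Y) := by
      have h := ((hcoXY_X.mul_right hcoXY_Y).neg_right.add_mul_left_right V)
      rwa [show -(X * Y) + (X + Y) * V = 3 * V ^ 2 - X * Y by linear_combination V * hV] at h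
    obtain ⟨aa, haa⟩ := cube_of_coprime hcoXYR hZR
    obtain ⟨ee, hee⟩ := cube_of_coprime hcoXYR.symm
      (show (3 * V ^ 2 - X * Y) * (X + Y) = Z ^ 3 by linear_combination hZR)
    have h3a : (3:ℤ) ∣ aa := by
      refine Int.prime_three.dvd_of_dvd_pow (n := 3) ?_
      rw [← haa]; exact ⟨V, hV⟩
    obtain ⟨a1, ha1⟩ := h3a
    have h3e : ¬ (3:ℤ) ∣ ee := by
      intro h
      apply h3R; rw [hee]; exact dvd_pow h three_ne_zero
    have haane : aa ≠ 0 := by rintro rfl; simp at haa; exact hXYne haa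
    have ha1ne : a1 ≠ 0 := by rintro rfl; rw [mul_zero] at ha1; exact haane ha1
    have hQ3 : X ^ 2 - X * Y + Y ^ 2 = 3 * ee ^ 3 := by rw [← hee]; exact hQR
    have h27 : (27:ℤ) ∣ X + Y := by rw [haa, ha1]; exact ⟨a1 ^ 3, by ring⟩
    obtain ⟨p, q, hpq, hcase⟩ := P2 hco h27 h3e hQ3
    have hZae : Z = aa * ee := by
      apply cube_inj
      rw [mul_pow, ← haa, ← hee, ← hZR]
    -- size chain
    have haadvd : aa.natAbs ≤ Z.natAbs := by
      apply Nat.le_of_dvd (by omega)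
      exact Int.natAbs_dvd_natAbs.mpr ⟨ee, hZae⟩
    have hnatmul : aa.natAbs = 3 * a1.natAbs := by rw [ha1, Int.natAbs_mul]; rfl
    have ha1pos : 1 ≤ a1.natAbs := by omega
    have hlt : a1.natAbs < n := by omega
    rcases hcase with hc | hc
    · have heq2 : p * q * (p - q) = 3 * a1 ^ 3 := by
        apply mul_left_cancel₀ (show (9:ℤ) ≠ 0 by norm_num)
        rw [← hc, haa, ha1]; ring
      obtain ⟨X', Y', Z', hco', hX', hY', hZ', hdvd', heq'⟩ := arrangement hpq ha1ne heq2
      have hle : Z'.natAbs ≤ a1.natAbs :=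
        Nat.le_of_dvd (by omega) (Int.natAbs_dvd_natAbs.mpr hdvd')
      exact ih a1.natAbs hlt X' Y' Z' hle hco' hX' hY' hZ' heq'
    · have heq2 : p * q * (p - q) = 3 * (-a1) ^ 3 := by
        apply mul_left_cancel₀ (show (9:ℤ) ≠ 0 by norm_num)
        linear_combination hc - haa - (aa ^ 2 + 3 * a1 * aa + 9 * a1 ^ 2) * ha1
      have ha1ne' : -a1 ≠ 0 := neg_ne_zero.mpr ha1ne
      obtain ⟨X', Y', Z', hco', hX', hY', hZ', hdvd', heq'⟩ := arrangement hpq ha1ne' heq2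
      have hle : Z'.natAbs ≤ a1.natAbs := by
        have := Nat.le_of_dvd (by omega) (Int.natAbs_dvd_natAbs.mpr hdvd')
        simpa using this
      exact ih a1.natAbs hlt X' Y' Z' hle hco' hX' hY' hZ' heq'

theorem no_cube_sum' {X Y Z : ℤ} (hco : IsCoprime X Y) (hX : X ≠ 0) (hY : Y ≠ 0)
    (hZ : Z ≠ 0) (heq : X ^ 3 + Y ^ 3 = 3 * Z ^ 3) : False :=
  no_cube_sum Z.natAbs X Y Z le_rfl hco hX hY hZ heq

theorem coprime_three_of_not_dvd {z : ℤ} (h : ¬ (3:ℤ) ∣ z) : IsCoprime (3:ℤ) z := by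
  rw [Int.isCoprime_iff_gcd_eq_one]
  have h1 : ((Int.gcd 3 z : ℤ)) ∣ (3:ℤ) := Int.gcd_dvd_left _ _
  have h1' : Int.gcd 3 z ∣ 3 := by exact_mod_cast h1
  rcases (Nat.prime_three).eq_one_or_self_of_dvd _ h1' with h2 | h2
  · exact h2
  · exfalso
    apply h
    have h3 : ((Int.gcd 3 z : ℤ)) ∣ z := Int.gcd_dvd_right _ _
    rw [h2] at h3
    exact_mod_cast h3

theorem coprime_Q_left {Y Z : ℤ} (hco : IsCoprime Y Z) :
    IsCoprime Y (Y ^ 2 + Y * Z + Z ^ 2) := by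
  have h := (hco.mul_right hco).add_mul_left_right (Y + Z)
  rwa [show Z * Z + Y * (Y + Z) = Y ^ 2 + Y * Z + Z ^ 2 by ring] at h

theorem coprime_Q_right {Y Z : ℤ} (hco : IsCoprime Y Z) :
    IsCoprime Z (Y ^ 2 + Y * Z + Z ^ 2) := by
  have h := coprime_Q_left hco.symm
  rwa [show Z ^ 2 + Z * Y + Y ^ 2 = Y ^ 2 + Y * Z + Z ^ 2 by ring] at h

theorem caseB_core {Y Z k : ℤ} (hco : IsCoprime Y Z) (hY : Y ≠ 0) (hZ : Z ≠ 0)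
    (h3Y : (3:ℤ) ∣ Y) (hk : k ≠ 0)
    (heq : Y * Z * (Y ^ 2 + Y * Z + Z ^ 2) = 9 * k ^ 3) : False := by
  have h3Z : ¬ (3:ℤ) ∣ Z := fun h => three_not_dvd_both hco h3Y h
  have h3Q : ¬ (3:ℤ) ∣ (Y ^ 2 + Y * Z + Z ^ 2) := by
    intro h
    apply h3Z
    refine Int.prime_three.dvd_of_dvd_pow (n := 2) ?_
    obtain ⟨m, hm⟩ := h3Y
    obtain ⟨cq, hcq⟩ := h
    exact ⟨cq - 3 * m ^ 2 - m * Z, by linear_combination hcq - (Y + 3 * m + Z) * hm⟩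
  have hcoYQ : IsCoprime Y (Y ^ 2 + Y * Z + Z ^ 2) := coprime_Q_left hco
  have hcoZQ : IsCoprime Z (Y ^ 2 + Y * Z + Z ^ 2) := coprime_Q_right hco
  have hco3 : IsCoprime (3:ℤ) Z := coprime_three_of_not_dvd h3Z
  have hco3Q : IsCoprime (3:ℤ) (Y ^ 2 + Y * Z + Z ^ 2) := coprime_three_of_not_dvd h3Q
  have hprod1 : (3 * Y) * (Z * (Y ^ 2 + Y * Z + Z ^ 2)) = (3 * k) ^ 3 := by
    linear_combination 3 * heq
  obtain ⟨W, hW⟩ := cube_of_coprime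
    ((IsCoprime.mul_left hco3 hco).mul_right (IsCoprime.mul_left hco3Q hcoYQ)) hprod1
  have h3W : (3:ℤ) ∣ W := Int.prime_three.dvd_of_dvd_pow (show (3:ℤ) ∣ W ^ 3 from ⟨Y, hW.symm⟩)
  obtain ⟨m, hm⟩ := h3W
  have hYm : Y = 9 * m ^ 3 := by
    apply mul_left_cancel₀ (show (3:ℤ) ≠ 0 by norm_num)
    rw [hW, hm]; ring
  have hprod3 : (Y ^ 2 + Y * Z + Z ^ 2) * ((3 * Y) * Z) = (3 * k) ^ 3 := by
    linear_combination 3 * heq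
  obtain ⟨t, ht⟩ := cube_of_coprime
    ((hco3Q.symm.mul_right hcoYQ.symm).mul_right hcoZQ.symm) hprod3
  have h3t : ¬ (3:ℤ) ∣ t := fun h => h3Q (ht ▸ dvd_pow h three_ne_zero)
  obtain ⟨p, q, hpq, hcase⟩ := P1 hco h3Y h3Z h3t ht
  have hmne : m ≠ 0 := by
    rintro rfl
    rw [show (9:ℤ) * 0 ^ 3 = 0 by ring] at hYm
    exact hY hYm
  rcases hcase with hc | hc
  · have heq2 : p * q * (p - q) = 3 * m ^ 3 := by
      apply mul_left_cancel₀ (show (3:ℤ) ≠ 0 by norm_num)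
      linear_combination -hc + hYm
    obtain ⟨X', Y', Z', hco', hX', hY', hZ', _, heq'⟩ := arrangement hpq hmne heq2
    exact no_cube_sum' hco' hX' hY' hZ' heq'
  · have heq2 : p * q * (p - q) = 3 * (-m) ^ 3 := by
      apply mul_left_cancel₀ (show (3:ℤ) ≠ 0 by norm_num)
      linear_combination hc - hYm
    obtain ⟨X', Y', Z', hco', hX', hY', hZ', _, heq'⟩ :=
      arrangement hpq (neg_ne_zero.mpr hmne) heq2
    exact no_cube_sum' hco' hX' hY' hZ' heq'

theorem int_main {a b Y Z : ℤ} (ha : a ≠ 0) (hb : b ≠ 0) (hab : IsCoprime a b)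
    (hY : Y ≠ 0) (hZ : Z ≠ 0) (hYZ : Y + Z ≠ 0) (hco : IsCoprime Y Z)
    (heq : a ^ 3 * (Y + Z) = -3 * b ^ 3 * (Y * Z * (Y ^ 2 + Y * Z + Z ^ 2))) : False := by
  have hb3 : b ^ 3 ∣ Y + Z := by
    have hcop : IsCoprime (b ^ 3) (a ^ 3) := hab.symm.pow
    refine hcop.dvd_of_dvd_mul_left ?_
    exact ⟨-3 * (Y * Z * (Y ^ 2 + Y * Z + Z ^ 2)), by linear_combination heq⟩
  obtain ⟨c, hcYZ⟩ := hb3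
  have heq2 : a ^ 3 * c = -3 * (Y * Z * (Y ^ 2 + Y * Z + Z ^ 2)) := by
    apply mul_left_cancel₀ (pow_ne_zero 3 hb)
    linear_combination heq - a ^ 3 * hcYZ
  have hcoYZ_Y : IsCoprime (Y + Z) Y := by
    have h := hco.symm.add_mul_left_left 1
    rwa [show Z + Y * 1 = Y + Z by ring] at h
  have hcoYZ_Z : IsCoprime (Y + Z) Z := by
    have h := hco.add_mul_left_left 1
    rwa [show Y + Z * 1 = Y + Z by ring] at h
  have hcoYZ_Q : IsCoprime (Y + Z) (Y ^ 2 + Y * Z + Z ^ 2) := by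
    have h := ((hcoYZ_Y.mul_right hcoYZ_Z).neg_right.add_mul_left_right (Y + Z))
    rwa [show -(Y * Z) + (Y + Z) * (Y + Z) = Y ^ 2 + Y * Z + Z ^ 2 by ring] at h
  have hcdvd : c ∣ Y + Z := ⟨b ^ 3, by linear_combination hcYZ⟩
  have hcoc : IsCoprime c (Y * Z * (Y ^ 2 + Y * Z + Z ^ 2)) :=
    ((hcoYZ_Y.mul_right hcoYZ_Z).mul_right hcoYZ_Q).of_isCoprime_of_dvd_left hcdvd
  have hc3 : c ∣ 3 := by
    have h1 : c ∣ a ^ 3 * c := ⟨a ^ 3, mul_comm _ _⟩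
    rw [heq2] at h1
    have h2 : c ∣ 3 * (Y * Z * (Y ^ 2 + Y * Z + Z ^ 2)) := by
      refine dvd_neg.mp ?_
      rwa [show -3 * (Y * Z * (Y ^ 2 + Y * Z + Z ^ 2)) =
        -(3 * (Y * Z * (Y ^ 2 + Y * Z + Z ^ 2))) by ring] at h1
    exact hcoc.dvd_of_dvd_mul_right h2
  have hcnat : c.natAbs ∣ 3 := by
    have h := Int.natAbs_dvd_natAbs.mpr hc3
    simpa using h
  have hcne : c ≠ 0 := by
    rintro rfl
    rw [mul_zero] at hcYZ
    exact hYZ hcYZ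
  rcases (Nat.prime_three).eq_one_or_self_of_dvd _ hcnat with h1 | h1
  · -- c = ±1 : case B
    have hd : (3:ℤ) ∣ a ^ 3 * c :=
      ⟨-(Y * Z * (Y ^ 2 + Y * Z + Z ^ 2)), by linear_combination heq2⟩
    have h3a3 : (3:ℤ) ∣ a ^ 3 := by
      rcases Int.natAbs_eq_iff.mp h1 with hc1 | hc1 <;> norm_num at hc1
      · rwa [hc1, mul_one] at hd
      · rw [hc1, mul_neg_one] at hd
        exact dvd_neg.mp hd
    have h3a : (3:ℤ) ∣ a := Int.prime_three.dvd_of_dvd_pow h3a3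
    obtain ⟨a1, ha1⟩ := h3a
    have ha1ne : a1 ≠ 0 := by rintro rfl; rw [mul_zero] at ha1; exact ha ha1
    have hccube : c ^ 3 = c := by
      rcases Int.natAbs_eq_iff.mp h1 with hc1 | hc1 <;> norm_num at hc1 <;> rw [hc1] <;> ring
    have hprod : Y * Z * (Y ^ 2 + Y * Z + Z ^ 2) = 9 * (-(c * a1)) ^ 3 := by
      apply mul_left_cancel₀ (show (-3:ℤ) ≠ 0 by norm_num)
      calc (-3) * (Y * Z * (Y ^ 2 + Y * Z + Z ^ 2)) = a ^ 3 * c := by linear_combination -heq2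
        _ = (-3) * (9 * (-(c * a1)) ^ 3) := by
            rw [ha1]; linear_combination -27 * a1 ^ 3 * hccube
    have hkne : -(c * a1) ≠ 0 := neg_ne_zero.mpr (mul_ne_zero hcne ha1ne)
    have h3YZQ : (3:ℤ) ∣ Y * Z * (Y ^ 2 + Y * Z + Z ^ 2) :=
      ⟨3 * (-(c * a1)) ^ 3, by rw [hprod]; ring⟩
    rcases Int.prime_three.dvd_mul.mp h3YZQ with h3 | h3
    · rcases Int.prime_three.dvd_mul.mp h3 with h3' | h3'
      · exact caseB_core hco hY hZ h3' hkne hprod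
      · refine caseB_core hco.symm hZ hY h3' hkne ?_
        linear_combination hprod
    · -- 3 ∣ Q : impossible
      have h3Y' : ¬ (3:ℤ) ∣ Y := by
        intro h
        refine three_not_dvd_both hco h ?_
        refine Int.prime_three.dvd_of_dvd_pow (n := 2) ?_
        obtain ⟨cq, hcq⟩ := h3
        obtain ⟨my, hmy⟩ := h
        exact ⟨cq - 3 * my ^ 2 - my * Z, by linear_combination hcq - (Y + 3 * my + Z) * hmy⟩
      have h3Z' : ¬ (3:ℤ) ∣ Z := by
        intro h
        refine three_not_dvd_both hco ?_ h
        refine Int.prime_three.dvd_of_dvd_pow (n := 2) ?_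
        obtain ⟨cq, hcq⟩ := h3
        obtain ⟨mz, hmz⟩ := h
        exact ⟨cq - 3 * mz ^ 2 - mz * Y, by linear_combination hcq - (Z + 3 * mz + Y) * hmz⟩
      have h3YmZ : (3:ℤ) ∣ Y - Z := by
        refine Int.prime_three.dvd_of_dvd_pow (n := 2) ?_
        obtain ⟨cq, hcq⟩ := h3
        exact ⟨cq - Y * Z, by linear_combination hcq⟩
      have h9YZQ : (9:ℤ) ∣ (Y * Z) * (Y ^ 2 + Y * Z + Z ^ 2) :=
        ⟨(-(c * a1)) ^ 3, by linear_combination hprod⟩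
      have hco9 : IsCoprime (9:ℤ) (Y * Z) := by
        have h : IsCoprime ((3:ℤ) ^ 2) (Y * Z) := ((coprime_three_of_not_dvd h3Y').mul_right
          (coprime_three_of_not_dvd h3Z')).pow_left
        rwa [show ((3:ℤ)) ^ 2 = 9 by norm_num] at h
      have h9Q : (9:ℤ) ∣ Y ^ 2 + Y * Z + Z ^ 2 := hco9.dvd_of_dvd_mul_left h9YZQ
      obtain ⟨d, hd'⟩ := h3YmZ
      obtain ⟨cq9, hcq9⟩ := h9Q
      have h3YZ : (3:ℤ) ∣ Y * Z := by
        refine ⟨cq9 - d ^ 2, ?_⟩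
        apply mul_left_cancel₀ (show (3:ℤ) ≠ 0 by norm_num)
        linear_combination hcq9 - (Y - Z + 3 * d) * hd'
      rcases Int.prime_three.dvd_mul.mp h3YZ with h | h
      exacts [h3Y' h, h3Z' h]
  · -- c = ±3 : case A
    have hcoY_ZQ : IsCoprime Y (Z * (Y ^ 2 + Y * Z + Z ^ 2)) :=
      hco.mul_right (coprime_Q_left hco)
    have hcoZ_YQ : IsCoprime Z (Y * (Y ^ 2 + Y * Z + Z ^ 2)) :=
      hco.symm.mul_right (coprime_Q_right hco)
    rcases Int.natAbs_eq_iff.mp h1 with hc1 | hc1 <;> norm_num at hc1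
    · -- c = 3
      have hprodA : Y * (Z * (Y ^ 2 + Y * Z + Z ^ 2)) = (-a) ^ 3 := by
        apply mul_left_cancel₀ (show (3:ℤ) ≠ 0 by norm_num)
        linear_combination heq2 - a ^ 3 * hc1
      obtain ⟨r, hr⟩ := cube_of_coprime hcoY_ZQ hprodA
      obtain ⟨sv, hsv⟩ := cube_of_coprime hcoZ_YQ
        (show Z * (Y * (Y ^ 2 + Y * Z + Z ^ 2)) = (-a) ^ 3 by linear_combination hprodA)
      refine no_cube_sum' (coprime_of_cube hco hr hsv)
        (pow_ne_zero_of_ne hr.symm hY) (pow_ne_zero_of_ne hsv.symm hZ) hb ?_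
      linear_combination -hr - hsv + hcYZ + b ^ 3 * hc1
    · -- c = -3
      have hprodA : Y * (Z * (Y ^ 2 + Y * Z + Z ^ 2)) = a ^ 3 := by
        apply mul_left_cancel₀ (show (3:ℤ) ≠ 0 by norm_num)
        linear_combination heq2 - a ^ 3 * hc1
      obtain ⟨r, hr⟩ := cube_of_coprime hcoY_ZQ hprodA
      obtain ⟨sv, hsv⟩ := cube_of_coprime hcoZ_YQ
        (show Z * (Y * (Y ^ 2 + Y * Z + Z ^ 2)) = a ^ 3 by linear_combination hprodA)
      refine no_cube_sum' (coprime_of_cube hco hr hsv)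
        (pow_ne_zero_of_ne hr.symm hY) (pow_ne_zero_of_ne hsv.symm hZ)
        (neg_ne_zero.mpr hb) ?_
      linear_combination -hr - hsv + hcYZ + b ^ 3 * hc1

end PQ3

open PQ3 in
/-- The only rational points on the plane projective quartic
`x³y + x³z + 3y³z + 3y²z² + 3yz³ = 0` are `[1 : 0 : 0]`, `[0 : 1 : 0]`, and
`[0 : 0 : 1]`: any rational solution with `(x, y, z) ≠ (0, 0, 0)` has at least
two of `x`, `y`, `z` equal to zero. -/
theorem rational_points_of_plane_quartic_three (x y z : ℚ)
    (hne : ¬(x = 0 ∧ y = 0 ∧ z = 0))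
    (h : x ^ 3 * y + x ^ 3 * z + 3 * y ^ 3 * z + 3 * y ^ 2 * z ^ 2 + 3 * y * z ^ 3 = 0) :
    (x = 0 ∧ y = 0) ∨ (x = 0 ∧ z = 0) ∨ (y = 0 ∧ z = 0) := by
  by_cases hy : y = 0
  · subst hy
    have h' : x ^ 3 * z = 0 := by linear_combination h
    rcases mul_eq_zero.mp h' with h'' | h''
    · exact Or.inl ⟨pow_eq_zero_iff three_ne_zero |>.mp h'', rfl⟩
    · exact Or.inr (Or.inr ⟨rfl, h''⟩)
  by_cases hz : z = 0
  · subst hz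
    have h' : x ^ 3 * y = 0 := by linear_combination h
    rcases mul_eq_zero.mp h' with h'' | h''
    · exact Or.inr (Or.inl ⟨pow_eq_zero_iff three_ne_zero |>.mp h'', rfl⟩)
    · exact absurd h'' hy
  exfalso
  by_cases hyz : y + z = 0
  · have hzy : z = -y := by linarith
    rw [hzy] at h
    have h4 : y ^ 4 = 0 := by linear_combination -h / 3
    exact hy (pow_eq_zero_iff (by norm_num : (4:ℕ) ≠ 0) |>.mp h4)
  by_cases hx : x = 0
  · rw [hx] at h
    have h' : y * z * (y ^ 2 + y * z + z ^ 2) = 0 := by linear_combination h / 3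
    rcases mul_eq_zero.mp h' with h'' | h''
    · rcases mul_eq_zero.mp h'' with h3 | h3
      exacts [hy h3, hz h3]
    · have hy2 : 0 < y ^ 2 := by positivity
      nlinarith [sq_nonneg (y + z), sq_nonneg z]
  -- main case : x, y, z all nonzero, y + z ≠ 0
  have hdy : ((y.den : ℚ)) ≠ 0 := Nat.cast_ne_zero.mpr y.den_nz
  have hdz : ((z.den : ℚ)) ≠ 0 := Nat.cast_ne_zero.mpr z.den_nz
  have hy1 : (y.num : ℚ) = y * (y.den : ℚ) := (Rat.mul_den_eq_num y).symm
  have hz1 : (z.num : ℚ) = z * (z.den : ℚ) := (Rat.mul_den_eq_num z).symm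
  set d : ℚ := (y.den : ℚ) * (z.den : ℚ) with hd
  set Y0 : ℤ := y.num * (z.den : ℤ) with hY0
  set Z0 : ℤ := z.num * (y.den : ℤ) with hZ0
  have hY0Q : (Y0 : ℚ) = y * d := by rw [hY0, hd]; push_cast; rw [hy1]; ring
  have hZ0Q : (Z0 : ℚ) = z * d := by rw [hZ0, hd]; push_cast; rw [hz1]; ring
  have hY0ne : Y0 ≠ 0 :=
    mul_ne_zero (Rat.num_ne_zero.mpr hy) (Int.natCast_ne_zero.mpr z.den_nz)
  have hZ0ne : Z0 ≠ 0 :=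
    mul_ne_zero (Rat.num_ne_zero.mpr hz) (Int.natCast_ne_zero.mpr y.den_nz)
  obtain ⟨Y, hYg⟩ := (Int.gcd_dvd_left _ _ : (Int.gcd Y0 Z0 : ℤ) ∣ Y0)
  obtain ⟨Z, hZg⟩ := (Int.gcd_dvd_right _ _ : (Int.gcd Y0 Z0 : ℤ) ∣ Z0)
  set g : ℕ := Int.gcd Y0 Z0 with hgdef
  have hgne : g ≠ 0 := by
    intro h0
    exact hY0ne (Int.gcd_eq_zero_iff.mp h0).1
  have hcoYZ : IsCoprime Y Z := by
    rw [Int.isCoprime_iff_gcd_eq_one]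
    have hmul := Int.gcd_mul_left ((g : ℤ)) Y Z
    rw [← hYg, ← hZg] at hmul
    rw [Int.natAbs_natCast] at hmul
    have hg1 : g * 1 = g * Int.gcd Y Z := by rw [mul_one]; exact hmul
    exact (Nat.eq_of_mul_eq_mul_left (Nat.pos_of_ne_zero hgne) hg1).symm
  have hYne : Y ≠ 0 := by rintro rfl; rw [mul_zero] at hYg; exact hY0ne hYg
  have hZne : Z ≠ 0 := by rintro rfl; rw [mul_zero] at hZg; exact hZ0ne hZg
  have hdne : d ≠ 0 := mul_ne_zero hdy hdz
  set w : ℚ := (g : ℚ) / d with hwdef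
  have hwne : w ≠ 0 := div_ne_zero (Nat.cast_ne_zero.mpr hgne) hdne
  have hyY : y = w * (Y : ℚ) := by
    have hc : (Y0 : ℚ) = (g : ℚ) * (Y : ℚ) := by exact_mod_cast hYg
    rw [hY0Q] at hc
    rw [hwdef]
    field_simp
    linear_combination hc
  have hzZ : z = w * (Z : ℚ) := by
    have hc : (Z0 : ℚ) = (g : ℚ) * (Z : ℚ) := by exact_mod_cast hZg
    rw [hZ0Q] at hc
    rw [hwdef]
    field_simp
    linear_combination hc
  set x0 : ℚ := x / w with hx0def
  have hx0ne : x0 ≠ 0 := div_ne_zero hx hwne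
  have hxx : x = w * x0 := by rw [hx0def]; field_simp
  rw [hxx, hyY, hzZ] at h
  have hE4 : w ^ 4 * (x0 ^ 3 * ((Y : ℚ) + (Z : ℚ)) +
      3 * ((Y : ℚ) * (Z : ℚ) * ((Y : ℚ) ^ 2 + (Y : ℚ) * (Z : ℚ) + (Z : ℚ) ^ 2))) = 0 := by
    linear_combination h
  have E := (mul_eq_zero.mp hE4).resolve_left (pow_ne_zero 4 hwne)
  set A : ℤ := x0.num with hA
  set B : ℤ := (x0.den : ℤ) with hB
  have hBne : B ≠ 0 := by rw [hB]; exact Int.natCast_ne_zero.mpr x0.den_nz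
  have hAne : A ≠ 0 := Rat.num_ne_zero.mpr hx0ne
  have hab : IsCoprime A B := by
    rw [Int.isCoprime_iff_gcd_eq_one]
    have hred := x0.reduced
    rw [hA, hB]
    show x0.num.natAbs.gcd ((x0.den : ℤ)).natAbs = 1
    rw [Int.natAbs_natCast]
    exact hred
  have hx0AB : x0 * (B : ℚ) = (A : ℚ) := by
    rw [hA, hB]
    push_cast
    exact Rat.mul_den_eq_num x0
  have hQeq : (A : ℚ) ^ 3 * ((Y : ℚ) + (Z : ℚ)) = -3 * (B : ℚ) ^ 3 *
      ((Y : ℚ) * (Z : ℚ) * ((Y : ℚ) ^ 2 + (Y : ℚ) * (Z : ℚ) + (Z : ℚ) ^ 2)) := by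
    linear_combination (-(((A : ℚ) ^ 2 + (A : ℚ) * (x0 * (B : ℚ)) + (x0 * (B : ℚ)) ^ 2) *
      ((Y : ℚ) + (Z : ℚ)))) * hx0AB + (B : ℚ) ^ 3 * E
  have hfinal : A ^ 3 * (Y + Z) = -3 * B ^ 3 * (Y * Z * (Y ^ 2 + Y * Z + Z ^ 2)) := by
    exact_mod_cast hQeq
  have hYZsum : Y + Z ≠ 0 := by
    intro h0
    apply hyz
    have hs : y + z = w * ((Y : ℚ) + (Z : ℚ)) := by rw [hyY, hzZ]; ring
    have hz0 : ((Y : ℚ) + (Z : ℚ)) = 0 := by exact_mod_cast h0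
    rw [hs, hz0, mul_zero]
  exact int_main hAne hBne hab hYne hZne hYZsum hcoYZ hfinal
end

section
/- Let p ≥ 5 be a prime and k ≥ 1 an integer, and let B₀(pᵏ) denote the subgroup of GL₂(ℤ/pᵏℤ) consisting of those matrices whose lower-left entry is divisible by p. Then for every prime q, the prime q divides the order of the commutator subgroup of B₀(pᵏ) if and only if q = p. Equivalently, the radical of the order of the commutator subgroup of B₀(pᵏ) equals p, i.e., this commutator subgroup is a nontrivial p-group. -/
open Matrix
open scoped commutatorElement

/-- The Borel-type subgroup `B₀(pᵏ)` of `GL₂(ℤ/pᵏℤ)` consisting of the matrices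
whose lower-left entry is divisible by `p`. -/
def Borel0 (p k : ℕ) : Subgroup (GL (Fin 2) (ZMod (p ^ k))) where
  carrier := {A | (p : ZMod (p ^ k)) ∣ (A : Matrix (Fin 2) (Fin 2) (ZMod (p ^ k))) 1 0}
  one_mem' := by
    simp [Matrix.one_apply]
  mul_mem' := by
    intro A B hA hB
    simp only [Set.mem_setOf_eq, Units.val_mul, Matrix.mul_apply, Fin.sum_univ_two] at *
    exact dvd_add (hA.mul_right _) (hB.mul_left _)
  inv_mem' := by
    intro A hA
    simp only [Set.mem_setOf_eq] at *
    rw [Matrix.coe_units_inv, Matrix.inv_def, Matrix.adjugate_fin_two, Matrix.smul_apply]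
    simp only [Matrix.of_apply, Matrix.cons_val', Matrix.cons_val_zero, Matrix.cons_val_one,
      Matrix.head_cons, Matrix.empty_val', Matrix.cons_val_fin_one, Matrix.head_fin_const,
      smul_eq_mul]
    exact Dvd.dvd.mul_left (dvd_neg.mpr hA) _

section BorelAux
open Finset

variable {p k : ℕ}

lemma dvd_iff_cast (hk0 : k ≠ 0) (x : ZMod (p ^ k)) [NeZero (p ^ k)] :
    (p : ZMod (p ^ k)) ∣ x ↔ ZMod.castHom (dvd_pow_self p hk0) (ZMod p) x = 0 := by
  constructor
  · rintro ⟨y, rfl⟩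
    rw [_root_.map_mul, map_natCast, ZMod.natCast_self, zero_mul]
  · intro h
    have hx : ((x.val : ℕ) : ZMod (p ^ k)) = x := by
      rw [ZMod.natCast_val, ZMod.cast_id]
    rw [← hx, map_natCast] at h
    obtain ⟨c, hc⟩ := (ZMod.natCast_eq_zero_iff _ p).mp h
    exact ⟨(c : ZMod (p ^ k)), by rw [← hx, hc]; push_cast; ring⟩

lemma mul_tri {F : Type*} [CommRing F] {M N : Matrix (Fin 2) (Fin 2) F}
    (hM : M 1 0 = 0) (hN : N 1 0 = 0) :
    (M * N) 1 0 = 0 ∧ (M * N) 0 0 = M 0 0 * N 0 0 ∧ (M * N) 1 1 = M 1 1 * N 1 1 := by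
  refine ⟨?_, ?_, ?_⟩ <;> simp [Matrix.mul_apply, Fin.sum_univ_two, hM, hN]
-- fix M N type


lemma inv_tri {F : ℕ} [Fact F.Prime] (u : GL (Fin 2) (ZMod F))
    (h : (u : Matrix (Fin 2) (Fin 2) (ZMod F)) 1 0 = 0) :
    (↑u⁻¹ : Matrix (Fin 2) (Fin 2) (ZMod F)) 1 0 = 0 ∧
    (↑u⁻¹ : Matrix (Fin 2) (Fin 2) (ZMod F)) 0 0 = ((u : Matrix (Fin 2) (Fin 2) (ZMod F)) 0 0)⁻¹ ∧
    (↑u⁻¹ : Matrix (Fin 2) (Fin 2) (ZMod F)) 1 1 = ((u : Matrix (Fin 2) (Fin 2) (ZMod F)) 1 1)⁻¹ := by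
  set A : Matrix (Fin 2) (Fin 2) (ZMod F) := (u : Matrix (Fin 2) (Fin 2) (ZMod F)) with hA
  have hdet : A.det = A 0 0 * A 1 1 := by
    rw [Matrix.det_fin_two, h]; ring
  have hu : IsUnit A.det := by
    rw [← Matrix.isUnit_iff_isUnit_det]
    exact u.isUnit
  have hne : A 0 0 * A 1 1 ≠ 0 := by rw [← hdet]; exact hu.ne_zero
  have h00 : A 0 0 ≠ 0 := fun hc => hne (by rw [hc, zero_mul])
  have h11 : A 1 1 ≠ 0 := fun hc => hne (by rw [hc, mul_zero])
  have hcoe : (↑u⁻¹ : Matrix (Fin 2) (Fin 2) (ZMod F)) = A⁻¹ := coe_units_inv u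
  rw [hcoe, Matrix.inv_def, Matrix.adjugate_fin_two, Ring.inverse_eq_inv', hdet]
  refine ⟨?_, ?_, ?_⟩
  · simp [Matrix.smul_apply, h, mul_inv, smul_eq_mul]
  · simp only [Matrix.smul_apply, Matrix.of_apply, Matrix.cons_val', Matrix.cons_val_zero,
      Matrix.empty_val', Matrix.cons_val_fin_one, Matrix.cons_val_one, Matrix.head_cons,
      Matrix.head_fin_const, smul_eq_mul, mul_inv]
    field_simp
    try ring
  · simp only [Matrix.smul_apply, Matrix.of_apply, Matrix.cons_val', Matrix.cons_val_zero,
      Matrix.empty_val', Matrix.cons_val_fin_one, Matrix.cons_val_one, Matrix.head_cons,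
      Matrix.head_fin_const, smul_eq_mul, mul_inv]
    field_simp
    try ring

/-- Commutator of two "upper triangular" elements of `GL₂(F)` is upper unipotent. -/
lemma comm_tri {F : ℕ} [Fact F.Prime] (u v : GL (Fin 2) (ZMod F))
    (hu : (u : Matrix (Fin 2) (Fin 2) (ZMod F)) 1 0 = 0)
    (hv : (v : Matrix (Fin 2) (Fin 2) (ZMod F)) 1 0 = 0) :
    (↑⁅u, v⁆ : Matrix (Fin 2) (Fin 2) (ZMod F)) 1 0 = 0 ∧
    (↑⁅u, v⁆ : Matrix (Fin 2) (Fin 2) (ZMod F)) 0 0 = 1 ∧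
    (↑⁅u, v⁆ : Matrix (Fin 2) (Fin 2) (ZMod F)) 1 1 = 1 := by
  obtain ⟨hui, hui0, hui1⟩ := inv_tri u hu
  obtain ⟨hvi, hvi0, hvi1⟩ := inv_tri v hv
  set A : Matrix (Fin 2) (Fin 2) (ZMod F) := (u : Matrix (Fin 2) (Fin 2) (ZMod F)) with hA
  set B : Matrix (Fin 2) (Fin 2) (ZMod F) := (v : Matrix (Fin 2) (Fin 2) (ZMod F)) with hB
  have hdetu : A 0 0 * A 1 1 ≠ 0 := by
    have : IsUnit A.det := by rw [← Matrix.isUnit_iff_isUnit_det]; exact u.isUnit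
    rw [Matrix.det_fin_two, hu] at this
    simpa using this.ne_zero
  have hdetv : B 0 0 * B 1 1 ≠ 0 := by
    have : IsUnit B.det := by rw [← Matrix.isUnit_iff_isUnit_det]; exact v.isUnit
    rw [Matrix.det_fin_two, hv] at this
    simpa using this.ne_zero
  have hu0 : A 0 0 ≠ 0 := fun hc => hdetu (by rw [hc, zero_mul])
  have hu1 : A 1 1 ≠ 0 := fun hc => hdetu (by rw [hc, mul_zero])
  have hv0 : B 0 0 ≠ 0 := fun hc => hdetv (by rw [hc, zero_mul])
  have hv1 : B 1 1 ≠ 0 := fun hc => hdetv (by rw [hc, mul_zero])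
  have hval : (↑⁅u, v⁆ : Matrix (Fin 2) (Fin 2) (ZMod F))
      = A * B * (↑u⁻¹ : Matrix (Fin 2) (Fin 2) (ZMod F)) * (↑v⁻¹ : Matrix (Fin 2) (Fin 2) (ZMod F)) := by
    rw [commutatorElement_def]
    rfl
  obtain ⟨t1, t1a, t1b⟩ := mul_tri (M := A) (N := B) hu hv
  obtain ⟨t2, t2a, t2b⟩ := mul_tri (M := A * B) (N := (↑u⁻¹ : Matrix (Fin 2) (Fin 2) (ZMod F))) t1 hui
  obtain ⟨t3, t3a, t3b⟩ := mul_tri (M := A * B * (↑u⁻¹ : Matrix (Fin 2) (Fin 2) (ZMod F)))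
      (N := (↑v⁻¹ : Matrix (Fin 2) (Fin 2) (ZMod F))) t2 hvi
  rw [hval]
  refine ⟨t3, ?_, ?_⟩
  · rw [t3a, t2a, t1a, hui0, hvi0]; field_simp
  · rw [t3b, t2b, t1b, hui1, hvi1]; field_simp

/-- Predicate: unipotent upper-triangular modulo `p`. -/
def Pg (p k : ℕ) (g : GL (Fin 2) (ZMod (p ^ k))) : Prop :=
  (p : ZMod (p ^ k)) ∣ (g : Matrix (Fin 2) (Fin 2) (ZMod (p ^ k))) 1 0 ∧
  (p : ZMod (p ^ k)) ∣ ((g : Matrix (Fin 2) (Fin 2) (ZMod (p ^ k))) 0 0 - 1) ∧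
  (p : ZMod (p ^ k)) ∣ ((g : Matrix (Fin 2) (Fin 2) (ZMod (p ^ k))) 1 1 - 1)

section red
variable (hk0 : k ≠ 0) [NeZero (p ^ k)]
set_option linter.unusedSectionVars false
include hk0

noncomputable def redGL (hk0 : k ≠ 0) : GL (Fin 2) (ZMod (p ^ k)) →* GL (Fin 2) (ZMod p) :=
  Units.map ((RingHom.mapMatrix (ZMod.castHom (dvd_pow_self p hk0) (ZMod p))).toMonoidHom)

lemma redGL_val (g : GL (Fin 2) (ZMod (p ^ k))) :
    (redGL hk0 g : Matrix (Fin 2) (Fin 2) (ZMod p))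
      = (g : Matrix (Fin 2) (Fin 2) (ZMod (p ^ k))).map
          (ZMod.castHom (dvd_pow_self p hk0) (ZMod p)) := rfl

lemma redGL_entry (g : GL (Fin 2) (ZMod (p ^ k))) (i j : Fin 2) :
    (redGL hk0 g : Matrix (Fin 2) (Fin 2) (ZMod p)) i j
      = ZMod.castHom (dvd_pow_self p hk0) (ZMod p)
          ((g : Matrix (Fin 2) (Fin 2) (ZMod (p ^ k))) i j) := rfl

lemma Pg_iff_red (g : GL (Fin 2) (ZMod (p ^ k))) :
    Pg p k g ↔
      ((redGL hk0 g : Matrix (Fin 2) (Fin 2) (ZMod p)) 1 0 = 0 ∧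
       (redGL hk0 g : Matrix (Fin 2) (Fin 2) (ZMod p)) 0 0 = 1 ∧
       (redGL hk0 g : Matrix (Fin 2) (Fin 2) (ZMod p)) 1 1 = 1) := by
  have key : ∀ x : ZMod (p ^ k),
      ((p : ZMod (p ^ k)) ∣ (x - 1) ↔ ZMod.castHom (dvd_pow_self p hk0) (ZMod p) x = 1) := by
    intro x
    rw [dvd_iff_cast hk0, map_sub, _root_.map_one, sub_eq_zero]
  unfold Pg
  rw [redGL_entry, redGL_entry, redGL_entry, dvd_iff_cast hk0, key, key]

lemma Pg_one : Pg p k 1 := by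
  refine ⟨?_, ?_, ?_⟩ <;> simp [Matrix.one_apply]

lemma Pg_mul {g h : GL (Fin 2) (ZMod (p ^ k))} (hg : Pg p k g) (hh : Pg p k h) :
    Pg p k (g * h) := by
  rw [Pg_iff_red hk0] at hg hh ⊢
  rw [_root_.map_mul]
  obtain ⟨hg1, hg2, hg3⟩ := hg
  obtain ⟨hh1, hh2, hh3⟩ := hh
  obtain ⟨t1, t2, t3⟩ := mul_tri (M := (redGL hk0 g : Matrix (Fin 2) (Fin 2) (ZMod p)))
    (N := (redGL hk0 h : Matrix (Fin 2) (Fin 2) (ZMod p))) hg1 hh1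
  have hcoe : ((redGL hk0 g * redGL hk0 h : GL (Fin 2) (ZMod p)) : Matrix (Fin 2) (Fin 2) (ZMod p))
      = (redGL hk0 g : Matrix (Fin 2) (Fin 2) (ZMod p)) * (redGL hk0 h : Matrix (Fin 2) (Fin 2) (ZMod p)) :=
    rfl
  rw [hcoe, t2, t3, hg2, hh2, hg3, hh3]
  exact ⟨t1, by ring, by ring⟩

set_option maxHeartbeats 1000000 in
lemma Pg_inv (hp : p.Prime) {g : GL (Fin 2) (ZMod (p ^ k))} (hg : Pg p k g) : Pg p k g⁻¹ := by
  haveI : Fact p.Prime := ⟨hp⟩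
  rw [Pg_iff_red hk0] at hg ⊢
  rw [map_inv]
  obtain ⟨h1, h2, h3⟩ := hg
  obtain ⟨t1, t2, t3⟩ := inv_tri (redGL hk0 g) h1
  exact ⟨t1, by rw [t2, h2, inv_one], by rw [t3, h3, inv_one]⟩

set_option maxHeartbeats 1000000 in
lemma Pg_comm (hp : p.Prime) (g h : GL (Fin 2) (ZMod (p ^ k)))
    (hg : (p : ZMod (p ^ k)) ∣ (g : Matrix (Fin 2) (Fin 2) (ZMod (p ^ k))) 1 0)
    (hh : (p : ZMod (p ^ k)) ∣ (h : Matrix (Fin 2) (Fin 2) (ZMod (p ^ k))) 1 0) :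
    Pg p k ⁅g, h⁆ := by
  haveI : Fact p.Prime := ⟨hp⟩
  have hg' : (redGL hk0 g : Matrix (Fin 2) (Fin 2) (ZMod p)) 1 0 = 0 := by
    rw [redGL_entry]; exact (dvd_iff_cast hk0 _).mp hg
  have hh' : (redGL hk0 h : Matrix (Fin 2) (Fin 2) (ZMod p)) 1 0 = 0 := by
    rw [redGL_entry]; exact (dvd_iff_cast hk0 _).mp hh
  obtain ⟨t1, t2, t3⟩ := comm_tri (redGL hk0 g) (redGL hk0 h) hg' hh'
  rw [Pg_iff_red hk0, map_commutatorElement]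
  exact ⟨t1, t2, t3⟩
end red

section powers
variable {R : Type*} [CommRing R]

lemma mul_natCast_entry (X : Matrix (Fin 2) (Fin 2) R) (c : ℕ) (a b : Fin 2) :
    (X * (c : Matrix (Fin 2) (Fin 2) R)) a b = X a b * (c : R) := by
  rw [← Matrix.diagonal_natCast (n := Fin 2) (α := R) c, Matrix.mul_diagonal]

lemma pow_entry_dvd (d : R) (B : Matrix (Fin 2) (Fin 2) R)
    (h : ∀ a b, d ∣ B a b) : ∀ (i : ℕ) (a b : Fin 2), d ^ i ∣ (B ^ i) a b := by
  intro i
  induction i with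
  | zero => intro a b; simp
  | succ n ih =>
    intro a b
    rw [pow_succ, pow_succ, Matrix.mul_apply]
    exact Finset.dvd_sum fun c _ => mul_dvd_mul (ih a c) (h c b)

/-- Binomial step: if `M ≡ 1 mod d^j` then `M^p ≡ 1 mod d^(j+1)` where `d = p`. -/
lemma step_dvd {p : ℕ} (hp : 2 ≤ p) (j : ℕ) (hj : 1 ≤ j)
    (M : Matrix (Fin 2) (Fin 2) R)
    (h : ∀ a b, ((p : R)) ^ j ∣ (M - 1) a b) :
    ∀ a b, ((p : R)) ^ (j + 1) ∣ (M ^ p - 1) a b := by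
  intro a b
  set B : Matrix (Fin 2) (Fin 2) R := M - 1 with hB
  have hM : M = B + 1 := by rw [hB, sub_add_cancel]
  have hbin : M ^ p = ∑ i ∈ Finset.range (p + 1),
      B ^ i * 1 ^ (p - i) * (p.choose i : Matrix (Fin 2) (Fin 2) R) := by
    rw [hM, (Commute.one_right B).add_pow]
  have hsplit : M ^ p - 1 = ∑ i ∈ Finset.Ico 1 (p + 1),
      B ^ i * 1 ^ (p - i) * (p.choose i : Matrix (Fin 2) (Fin 2) R) := by
    rw [hbin, Finset.range_eq_Ico,
      Finset.sum_eq_sum_Ico_succ_bot (by omega : 0 < p + 1)]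
    simp
  rw [hsplit, Matrix.sum_apply]
  refine Finset.dvd_sum fun i hi => ?_
  rw [Finset.mem_Ico] at hi
  rw [one_pow, mul_one, mul_natCast_entry]
  rcases eq_or_lt_of_le hi.1 with h1 | h2
  · -- i = 1
    rw [← h1, Nat.choose_one_right, pow_one, pow_succ]
    exact mul_dvd_mul (h a b) dvd_rfl
  · -- 2 ≤ i
    have hdvd : ((p : R) ^ j) ^ i ∣ (B ^ i) a b := pow_entry_dvd _ B h i a b
    refine Dvd.dvd.mul_right (dvd_trans ?_ hdvd) _
    rw [← pow_mul]
    exact pow_dvd_pow _ (by nlinarith)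
end powers

section base
variable {p k : ℕ} (hk0 : k ≠ 0) [NeZero (p ^ k)]
set_option linter.unusedSectionVars false
include hk0

lemma base_dvd (hp : p.Prime) (g : GL (Fin 2) (ZMod (p ^ k))) (hg : Pg p k g) :
    ∀ a b, (p : ZMod (p ^ k)) ∣
      (((g : Matrix (Fin 2) (Fin 2) (ZMod (p ^ k)))) ^ p - 1) a b := by
  haveI : Fact p.Prime := ⟨hp⟩
  rw [Pg_iff_red hk0] at hg
  obtain ⟨h1, h2, h3⟩ := hg
  set f := ZMod.castHom (dvd_pow_self p hk0) (ZMod p) with hf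
  set M : Matrix (Fin 2) (Fin 2) (ZMod p) := (redGL hk0 g : Matrix (Fin 2) (Fin 2) (ZMod p))
    with hM
  set N : Matrix (Fin 2) (Fin 2) (ZMod p) := M - 1 with hN
  have hN10 : ∀ i, N i 0 = 0 := by
    intro i; fin_cases i <;>
      simp [hN, Matrix.sub_apply, Matrix.one_apply, h1, h2]
  have hN1j : ∀ j, N 1 j = 0 := by
    intro j; fin_cases j <;>
      simp [hN, Matrix.sub_apply, Matrix.one_apply, h1, h3]
  have hNsq : N * N = 0 := by
    ext i j
    rw [Matrix.mul_apply, Fin.sum_univ_two, hN10 i, hN1j j, zero_mul, mul_zero, add_zero,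
      Matrix.zero_apply]
  have hpowN : ∀ m : ℕ, (N + 1) ^ m = m • N + 1 := by
    intro m
    induction m with
    | zero => simp
    | succ n ih =>
      rw [pow_succ, ih, add_mul, one_mul, mul_add, mul_one, smul_mul_assoc, hNsq, smul_zero,
        succ_nsmul]
      abel
  have hMp : M ^ p = 1 := by
    have hMN : M = N + 1 := by rw [hN, sub_add_cancel]
    have hzero : p • N = 0 := by
      rw [← Nat.cast_smul_eq_nsmul (ZMod p), ZMod.natCast_self, zero_smul]
    rw [hMN, hpowN p, hzero, zero_add]
  intro a b
  rw [dvd_iff_cast hk0]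
  have hmm : f.mapMatrix (((g : Matrix (Fin 2) (Fin 2) (ZMod (p ^ k)))) ^ p - 1)
      = M ^ p - 1 := by
    rw [map_sub, map_pow, _root_.map_one]
    rfl
  have : f ((((g : Matrix (Fin 2) (Fin 2) (ZMod (p ^ k)))) ^ p - 1) a b)
      = (M ^ p - 1) a b := by
    rw [← hmm]; rfl
  rw [this, hMp, sub_self, Matrix.zero_apply]

lemma Pg_pow_eq_one (hp : p.Prime) (g : GL (Fin 2) (ZMod (p ^ k))) (hg : Pg p k g) :
    g ^ (p ^ k) = 1 := by
  have key : ∀ t, ∀ a b, (p : ZMod (p ^ k)) ^ (1 + t) ∣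
      (((g : Matrix (Fin 2) (Fin 2) (ZMod (p ^ k)))) ^ (p ^ (1 + t)) - 1) a b := by
    intro t
    induction t with
    | zero =>
      intro a b
      simpa using base_dvd hk0 hp g hg a b
    | succ n ih =>
      intro a b
      have hstep := step_dvd (hp := hp.two_le) (1 + n) (by omega)
        (((g : Matrix (Fin 2) (Fin 2) (ZMod (p ^ k)))) ^ (p ^ (1 + n))) ih a b
      have hre : ((((g : Matrix (Fin 2) (Fin 2) (ZMod (p ^ k)))) ^ (p ^ (1 + n))) ^ p)
          = ((g : Matrix (Fin 2) (Fin 2) (ZMod (p ^ k)))) ^ (p ^ (1 + (n + 1))) := by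
        rw [← pow_mul, ← pow_succ]
        ring_nf
      rw [hre] at hstep
      have he : 1 + n + 1 = 1 + (n + 1) := by omega
      rw [he] at hstep
      exact hstep
  have h2 : ∀ a b, (((g : Matrix (Fin 2) (Fin 2) (ZMod (p ^ k)))) ^ (p ^ k) - 1) a b = 0 := by
    intro a b
    have hk1 : 1 + (k - 1) = k := by omega
    have := key (k - 1) a b
    rw [hk1] at this
    have hzero : (p : ZMod (p ^ k)) ^ k = 0 := by
      rw [← Nat.cast_pow, ZMod.natCast_self]
    rw [hzero] at this
    exact zero_dvd_iff.mp this
  have h3 : ((g : Matrix (Fin 2) (Fin 2) (ZMod (p ^ k)))) ^ (p ^ k) = 1 := by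
    ext a b
    have := h2 a b
    rw [Matrix.sub_apply, sub_eq_zero] at this
    rw [this]
  refine Units.ext ?_
  rw [Units.val_pow_eq_pow_val, Units.val_one]
  exact h3
end base

end BorelAux

/-- For a prime `p ≥ 5` and `k ≥ 1`, a prime `q` divides the order of the commutator
subgroup of `B₀(pᵏ)` if and only if `q = p`. -/
theorem prime_dvd_card_commutator_Borel0_iff (p k : ℕ) (hp : p.Prime) (hp5 : 5 ≤ p)
    (hk : 1 ≤ k) (q : ℕ) (hq : q.Prime) :
    q ∣ Nat.card (commutator ↥(Borel0 p k)) ↔ q = p := by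
  have hk0 : k ≠ 0 := by omega
  haveI : Fact p.Prime := ⟨hp⟩
  haveI : NeZero (p ^ k) := ⟨pow_ne_zero k hp.pos.ne'⟩
  haveI : Fact (1 < p ^ k) := ⟨Nat.one_lt_pow hk0 hp.one_lt⟩
  -- every element of the commutator subgroup is unipotent upper triangular mod p
  have hPall : ∀ x : ↥(Borel0 p k), x ∈ commutator ↥(Borel0 p k) →
      Pg p k (x : GL (Fin 2) (ZMod (p ^ k))) := by
    intro x hx
    rw [commutator_def, Subgroup.commutator_def] at hx
    refine Subgroup.closure_induction ?_ ?_ ?_ ?_ hx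
    · rintro y ⟨g1, -, g2, -, rfl⟩
      have hcoe : ((⁅g1, g2⁆ : ↥(Borel0 p k)) : GL (Fin 2) (ZMod (p ^ k)))
          = ⁅(g1 : GL (Fin 2) (ZMod (p ^ k))), (g2 : GL (Fin 2) (ZMod (p ^ k)))⁆ := rfl
      rw [hcoe]
      exact Pg_comm hk0 hp _ _ g1.2 g2.2
    · exact Pg_one hk0
    · intro y z _ _ hy hz
      exact Pg_mul hk0 hy hz
    · intro y _ hy
      exact Pg_inv hk0 hp hy
  have hpg : IsPGroup p ↥(commutator ↥(Borel0 p k)) := by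
    intro g
    refine ⟨k, ?_⟩
    have h1 : ((g : ↥(Borel0 p k)) : GL (Fin 2) (ZMod (p ^ k))) ^ (p ^ k) = 1 :=
      Pg_pow_eq_one hk0 hp _ (hPall _ g.2)
    refine Subtype.ext (Subtype.ext ?_)
    rw [SubgroupClass.coe_pow, SubgroupClass.coe_pow]
    exact h1
  -- a nontrivial commutator
  let u : (ZMod (p ^ k))ˣ := ZMod.unitOfCoprime 2
    (Nat.Coprime.pow_right k ((Nat.coprime_primes Nat.prime_two hp).mpr (by omega)))
  have hu2 : (u : ZMod (p ^ k)) = 2 := by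
    show ((ZMod.unitOfCoprime 2 _ : (ZMod (p ^ k))ˣ) : ZMod (p ^ k)) = 2
    rw [ZMod.coe_unitOfCoprime]
    norm_num
  have huv : (u : ZMod (p ^ k)) * ((u⁻¹ : (ZMod (p ^ k))ˣ) : ZMod (p ^ k)) = 1 := u.mul_inv
  let Am : Matrix (Fin 2) (Fin 2) (ZMod (p ^ k)) := !![(u : ZMod (p ^ k)), 0; 0, 1]
  let Ai : Matrix (Fin 2) (Fin 2) (ZMod (p ^ k)) :=
    !![((u⁻¹ : (ZMod (p ^ k))ˣ) : ZMod (p ^ k)), 0; 0, 1]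
  let Bm : Matrix (Fin 2) (Fin 2) (ZMod (p ^ k)) := !![1, 1; 0, 1]
  let Bi : Matrix (Fin 2) (Fin 2) (ZMod (p ^ k)) := !![1, -1; 0, 1]
  have hA1 : Am * Ai = 1 := by
    ext i j
    fin_cases i <;> fin_cases j <;>
      simp [Am, Ai, Matrix.mul_apply, Fin.sum_univ_two, Matrix.one_apply, Units.mul_inv]
  have hA2 : Ai * Am = 1 := by
    ext i j
    fin_cases i <;> fin_cases j <;>
      simp [Am, Ai, Matrix.mul_apply, Fin.sum_univ_two, Matrix.one_apply, Units.inv_mul]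
  have hB1 : Bm * Bi = 1 := by
    ext i j
    fin_cases i <;> fin_cases j <;>
      simp [Bm, Bi, Matrix.mul_apply, Fin.sum_univ_two, Matrix.one_apply]
  have hB2 : Bi * Bm = 1 := by
    ext i j
    fin_cases i <;> fin_cases j <;>
      simp [Bm, Bi, Matrix.mul_apply, Fin.sum_univ_two, Matrix.one_apply]
  let a : GL (Fin 2) (ZMod (p ^ k)) := ⟨Am, Ai, hA1, hA2⟩
  let b : GL (Fin 2) (ZMod (p ^ k)) := ⟨Bm, Bi, hB1, hB2⟩
  have ha : a ∈ Borel0 p k := by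
    show (p : ZMod (p ^ k)) ∣ Am 1 0
    simp [Am]
  have hb : b ∈ Borel0 p k := by
    show (p : ZMod (p ^ k)) ∣ Bm 1 0
    simp [Bm]
  have hval : ((⁅a, b⁆ : GL (Fin 2) (ZMod (p ^ k))) : Matrix (Fin 2) (Fin 2) (ZMod (p ^ k))) = Am * Bm * Ai * Bi := rfl
  have h01 : ((⁅a, b⁆ : GL (Fin 2) (ZMod (p ^ k))) : Matrix (Fin 2) (Fin 2) (ZMod (p ^ k))) 0 1 = 1 := by
    rw [hval]
    simp only [Am, Ai, Bm, Bi]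
    rw [Matrix.mul_apply]
    simp [Matrix.mul_apply, Fin.sum_univ_two]
    linear_combination (-1 : ZMod (p ^ k)) * huv + hu2 + huv
  have hne : ⁅a, b⁆ ≠ 1 := by
    intro h
    rw [h] at h01
    simp [Matrix.one_apply] at h01
  set x : ↥(Borel0 p k) := ⟨a, ha⟩ with hxdef
  set y : ↥(Borel0 p k) := ⟨b, hb⟩ with hydef
  have hc : ⁅x, y⁆ ∈ commutator ↥(Borel0 p k) := by
    rw [commutator_def]
    exact Subgroup.commutator_mem_commutator (Subgroup.mem_top x) (Subgroup.mem_top y)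
  have hcne : ⁅x, y⁆ ≠ 1 := by
    intro h
    apply hne
    have := congrArg ((Borel0 p k).subtype) h
    rwa [map_commutatorElement, _root_.map_one] at this
  haveI : Nontrivial ↥(commutator ↥(Borel0 p k)) :=
    ⟨⟨⟨⁅x, y⁆, hc⟩, 1, fun h => hcne (by simpa using congrArg Subtype.val h)⟩⟩
  haveI : Finite ↥(commutator ↥(Borel0 p k)) := inferInstance
  obtain ⟨n, hn⟩ := IsPGroup.iff_card.mp hpg
  have hn0 : n ≠ 0 := by
    rintro rfl
    rw [pow_zero] at hn
    have := Finite.one_lt_card (α := ↥(commutator ↥(Borel0 p k)))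
    omega
  constructor
  · intro hdvd
    rw [hn] at hdvd
    exact (Nat.prime_dvd_prime_iff_eq hq hp).mp (hq.dvd_of_dvd_pow hdvd)
  · rintro rfl
    rw [hn]
    exact dvd_pow_self _ hn0
end

section
/- Let p ≥ 5 be a prime and let j, k ≥ 1 be integers. Let G be a subgroup of GL₂(ℤ/6ʲℤ), and let H be a subgroup of B₀(pᵏ), the subgroup of GL₂(ℤ/pᵏℤ) consisting of matrices whose lower-left entry is divisible by p. If Q is a group admitting a surjective group homomorphism from the commutator subgroup [G, G] and also a surjective group homomorphism from the commutator subgroup [H, H], then Q is the trivial group. -/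
open Matrix

open scoped commutatorElement

private lemma binom_aux {R : Type*} [CommRing R] (c : R) (D : Matrix (Fin 2) (Fin 2) R)
    (n : ℕ) : ∃ E, (1 + c • D) ^ n = 1 + ((n : R) * c) • D + (c * c) • E := by
  induction n with
  | zero => exact ⟨0, by simp⟩
  | succ n ih =>
    obtain ⟨E, hE⟩ := ih
    refine ⟨E + (n : R) • (D * D) + c • (E * D), ?_⟩
    rw [pow_succ, hE]
    simp only [add_mul, mul_add, mul_one, one_mul, smul_mul_assoc, mul_smul_comm, smul_smul,
      smul_add]
    push_cast
    match_scalars <;> ring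

private lemma pow_step {R : Type*} [CommRing R] (n : ℕ) {s : ℕ} (hs : 1 ≤ s)
    (D : Matrix (Fin 2) (Fin 2) R) :
    ∃ E, (1 + (n : R) ^ s • D) ^ n = 1 + (n : R) ^ (s + 1) • E := by
  obtain ⟨E, hE⟩ := binom_aux ((n : R) ^ s) D n
  refine ⟨D + (n : R) ^ (s - 1) • E, ?_⟩
  rw [hE]
  have h1 : (n : R) * (n : R) ^ s = (n : R) ^ (s + 1) := (pow_succ' _ _).symm
  have h2 : (n : R) ^ s * (n : R) ^ s = (n : R) ^ (s + 1) * (n : R) ^ (s - 1) := by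
    rw [← pow_add, ← pow_add]
    congr 1
    omega
  rw [h1, h2, smul_add, add_assoc, mul_smul]

private lemma pow_iter {R : Type*} [CommRing R] (n : ℕ) (D : Matrix (Fin 2) (Fin 2) R)
    (t : ℕ) : ∃ E, (1 + (n : R) • D) ^ (n ^ t) = 1 + (n : R) ^ (t + 1) • E := by
  induction t with
  | zero => exact ⟨D, by simp⟩
  | succ t ih =>
    obtain ⟨E, hE⟩ := ih
    obtain ⟨E', hE'⟩ := pow_step n (Nat.le_add_left 1 t) E
    exact ⟨E', by rw [pow_succ, pow_mul, hE, hE']⟩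

private lemma one_add_pow {R : Type*} [CommRing R] (N : Matrix (Fin 2) (Fin 2) R)
    (h : N * N = 0) (m : ℕ) : (1 + N) ^ m = 1 + (m : R) • N := by
  induction m with
  | zero => simp
  | succ m ih =>
    rw [pow_succ, ih]
    simp only [add_mul, mul_add, mul_one, one_mul, smul_mul_assoc, h, smul_zero, add_zero]
    push_cast
    match_scalars <;> ring

private lemma unit_pow_eq_one {M : ℕ} (n j : ℕ) (hMn : M = n ^ j) (hj : 1 ≤ j)
    (u : GL (Fin 2) (ZMod M))
    (h : ∀ i i' : Fin 2, (n : ZMod M) ∣ ((u : Matrix (Fin 2) (Fin 2) (ZMod M)) - 1) i i') :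
    u ^ n ^ (j - 1) = 1 := by
  classical
  have hA : (u : Matrix (Fin 2) (Fin 2) (ZMod M)) =
      1 + (n : ZMod M) • Matrix.of (fun i i' => (h i i').choose) := by
    funext i i'
    have hs := (h i i').choose_spec
    change (u : Matrix (Fin 2) (Fin 2) (ZMod M)) i i' - (1 : Matrix (Fin 2) (Fin 2) (ZMod M)) i i' = _ at hs
    simp only [Matrix.add_apply, Matrix.smul_apply, Matrix.of_apply, smul_eq_mul]
    linear_combination hs
  obtain ⟨E, hE⟩ := pow_iter (R := ZMod M) n (Matrix.of fun i i' => (h i i').choose) (j - 1)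
  have hj' : j - 1 + 1 = j := by omega
  have hcast : (n : ZMod M) ^ j = 0 := by
    rw [← Nat.cast_pow, ← hMn, ZMod.natCast_self]
  have hm : (u : Matrix (Fin 2) (Fin 2) (ZMod M)) ^ n ^ (j - 1) = 1 := by
    rw [hA, hE, hj', hcast, zero_smul, add_zero]
  exact Units.ext (by rw [Units.val_pow_eq_pow_val]; rw [hm]; rfl)

private lemma red_entry_eq_one {M m : ℕ} (hm : m ∣ M)
    (u : GL (Fin 2) (ZMod M))
    (hu : Matrix.GeneralLinearGroup.map (ZMod.castHom hm (ZMod m)) u = 1)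
    (i i' : Fin 2) :
    ZMod.castHom hm (ZMod m) (((u : Matrix (Fin 2) (Fin 2) (ZMod M)) - 1) i i') = 0 := by
  have h1 : (ZMod.castHom hm (ZMod m)).mapMatrix (u : Matrix (Fin 2) (Fin 2) (ZMod M)) = 1 :=
    congrArg Units.val hu
  have h2 : ZMod.castHom hm (ZMod m) ((u : Matrix (Fin 2) (Fin 2) (ZMod M)) i i') =
      (1 : Matrix (Fin 2) (Fin 2) (ZMod m)) i i' := by
    rw [← h1]; simp [RingHom.mapMatrix_apply, Matrix.map_apply]
  rw [Matrix.sub_apply, map_sub, h2, Matrix.one_apply, Matrix.one_apply,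
    apply_ite (ZMod.castHom hm (ZMod m)), _root_.map_one, _root_.map_zero]
  split <;> simp

private lemma dvd_val_of_cast_eq_zero {M m : ℕ} [NeZero M] (hm : m ∣ M) (a : ZMod M)
    (h : ZMod.castHom hm (ZMod m) a = 0) : m ∣ a.val := by
  haveI : NeZero m := ⟨fun hh => by subst hh; exact (NeZero.ne M) (Nat.eq_zero_of_zero_dvd hm)⟩
  have : ((a.val : ℕ) : ZMod m) = 0 := by
    rwa [ZMod.natCast_val, ← ZMod.castHom_apply (h := hm)]
  exact (ZMod.natCast_eq_zero_iff _ _).mp this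

private lemma cast_dvd_of_dvd_val {M : ℕ} [NeZero M] (d : ℕ) (a : ZMod M)
    (h : d ∣ a.val) : (d : ZMod M) ∣ a := by
  obtain ⟨c, hc⟩ := h
  exact ⟨(c : ZMod M), by rw [← Nat.cast_mul, ← hc, ZMod.natCast_zmod_val]⟩

private lemma mul10 {m : ℕ} (a b : GL (Fin 2) (ZMod m))
    (ha : Units.val a 1 0 = 0) (hb : Units.val b 1 0 = 0) :
    Units.val (a * b) 1 0 = 0 := by
  simp [Units.val_mul, Matrix.mul_apply, Fin.sum_univ_two, ha, hb]

private lemma inv10 {m : ℕ} (a : GL (Fin 2) (ZMod m))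
    (ha : Units.val a 1 0 = 0) : Units.val a⁻¹ 1 0 = 0 := by
  show ((a⁻¹ : GL (Fin 2) (ZMod m)) : Matrix (Fin 2) (Fin 2) (ZMod m)) 1 0 = 0
  rw [Matrix.coe_units_inv, Matrix.inv_def, Matrix.adjugate_fin_two, Matrix.smul_apply]
  simp [ha]

private lemma mul00 {m : ℕ} (a b : GL (Fin 2) (ZMod m))
    (hb : Units.val b 1 0 = 0) :
    Units.val (a * b) 0 0 = Units.val a 0 0 * Units.val b 0 0 := by
  simp [Units.val_mul, Matrix.mul_apply, Fin.sum_univ_two, hb]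

private lemma mul11 {m : ℕ} (a b : GL (Fin 2) (ZMod m))
    (ha : Units.val a 1 0 = 0) :
    Units.val (a * b) 1 1 = Units.val a 1 1 * Units.val b 1 1 := by
  simp [Units.val_mul, Matrix.mul_apply, Fin.sum_univ_two, ha]

private lemma self_mul_inv00 {m : ℕ} (a : GL (Fin 2) (ZMod m))
    (ha : Units.val a 1 0 = 0) :
    Units.val a 0 0 * Units.val a⁻¹ 0 0 = 1 := by
  have h := mul00 a a⁻¹ (inv10 a ha)
  rw [mul_inv_cancel, Units.val_one] at h
  rw [← h]
  simp [Matrix.one_apply]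

private lemma self_mul_inv11 {m : ℕ} (a : GL (Fin 2) (ZMod m))
    (ha : Units.val a 1 0 = 0) :
    Units.val a 1 1 * Units.val a⁻¹ 1 1 = 1 := by
  have h := mul11 a a⁻¹ ha
  rw [mul_inv_cancel, Units.val_one] at h
  rw [← h]
  simp [Matrix.one_apply]

private lemma commutator10 {m : ℕ} (a b : GL (Fin 2) (ZMod m))
    (ha : Units.val a 1 0 = 0) (hb : Units.val b 1 0 = 0) :
    Units.val ⁅a, b⁆ 1 0 = 0 := by
  rw [commutatorElement_def]
  exact mul10 _ _ (mul10 _ _ (mul10 _ _ ha hb) (inv10 a ha)) (inv10 b hb)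

private lemma commutator00 {m : ℕ} (a b : GL (Fin 2) (ZMod m))
    (ha : Units.val a 1 0 = 0) (hb : Units.val b 1 0 = 0) :
    Units.val ⁅a, b⁆ 0 0 = 1 := by
  rw [commutatorElement_def]
  rw [mul00 _ _ (inv10 b hb), mul00 _ _ (inv10 a ha), mul00 _ _ hb]
  have h1 := self_mul_inv00 a ha
  have h2 := self_mul_inv00 b hb
  linear_combination (Units.val b 0 0 * Units.val b⁻¹ 0 0) * h1 + h2

private lemma commutator11 {m : ℕ} (a b : GL (Fin 2) (ZMod m))
    (ha : Units.val a 1 0 = 0) (hb : Units.val b 1 0 = 0) :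
    Units.val ⁅a, b⁆ 1 1 = 1 := by
  rw [commutatorElement_def]
  rw [mul11 _ _ (mul10 _ _ (mul10 _ _ ha hb) (inv10 a ha)),
    mul11 _ _ (mul10 _ _ ha hb), mul11 _ _ ha]
  have h1 := self_mul_inv11 a ha
  have h2 := self_mul_inv11 b hb
  linear_combination (Units.val b 1 1 * Units.val b⁻¹ 1 1) * h1 + h2

private lemma unip_pow_eq_one {m : ℕ} (u : GL (Fin 2) (ZMod m))
    (h10 : Units.val u 1 0 = 0) (h00 : Units.val u 0 0 = 1)
    (h11 : Units.val u 1 1 = 1) :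
    u ^ m = 1 := by
  set N : Matrix (Fin 2) (Fin 2) (ZMod m) := Units.val u - 1 with hN
  have hNN : N * N = 0 := by
    funext i i'
    fin_cases i <;> fin_cases i' <;>
      simp [hN, Matrix.mul_apply, Fin.sum_univ_two, Matrix.sub_apply, Matrix.one_apply,
        h10, h00, h11]
  have hu : (1 : Matrix (Fin 2) (Fin 2) (ZMod m)) + N = Units.val u := by simp [hN]
  have hm : Units.val u ^ m = 1 := by
    rw [← hu, one_add_pow N hNN m, ZMod.natCast_self, zero_smul, add_zero]
  exact Units.ext (by rw [Units.val_pow_eq_pow_val, hm]; rfl)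

private def unipSub (m : ℕ) : Subgroup (GL (Fin 2) (ZMod m)) where
  carrier := {u | Units.val u 1 0 = 0 ∧ Units.val u 0 0 = 1 ∧ Units.val u 1 1 = 1}
  one_mem' := by
    refine ⟨?_, ?_, ?_⟩ <;> simp [Units.val_one, Matrix.one_apply]
  mul_mem' := by
    rintro a b ⟨ha10, ha00, ha11⟩ ⟨hb10, hb00, hb11⟩
    exact ⟨mul10 a b ha10 hb10, by rw [mul00 a b hb10, ha00, hb00, one_mul],
      by rw [mul11 a b ha10, ha11, hb11, one_mul]⟩
  inv_mem' := by
    rintro a ⟨ha10, ha00, ha11⟩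
    refine ⟨inv10 a ha10, ?_, ?_⟩
    · have h := self_mul_inv00 a ha10; rw [ha00, one_mul] at h; exact h
    · have h := self_mul_inv11 a ha10; rw [ha11, one_mul] at h; exact h

private lemma card_GL2 : Nat.card (GL (Fin 2) (ZMod 2)) = 6 := by
  haveI : Fact (Nat.Prime 2) := ⟨by norm_num⟩
  rw [Matrix.card_GL_field, Fin.prod_univ_two]
  simp [ZMod.card]

private lemma card_GL3 : Nat.card (GL (Fin 2) (ZMod 3)) = 48 := by
  haveI : Fact (Nat.Prime 3) := ⟨by norm_num⟩
  rw [Matrix.card_GL_field, Fin.prod_univ_two]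
  simp [ZMod.card]

private lemma g_side (j' : ℕ) (x : GL (Fin 2) (ZMod (6 ^ (1 + j')))) :
    x ^ (288 * 6 ^ j') = 1 := by
  haveI : NeZero (6 ^ (1 + j')) := ⟨pow_ne_zero _ (by norm_num)⟩
  have h2 : (2 : ℕ) ∣ 6 ^ (1 + j') :=
    dvd_trans ⟨3, rfl⟩ (dvd_pow_self 6 (by omega))
  have h3 : (3 : ℕ) ∣ 6 ^ (1 + j') :=
    dvd_trans ⟨2, rfl⟩ (dvd_pow_self 6 (by omega))
  have hred2 : Matrix.GeneralLinearGroup.map (ZMod.castHom h2 (ZMod 2)) (x ^ 288) = 1 := by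
    rw [map_pow, show (288 : ℕ) = Nat.card (GL (Fin 2) (ZMod 2)) * 48 from by rw [card_GL2],
      pow_mul, pow_card_eq_one', one_pow]
  have hred3 : Matrix.GeneralLinearGroup.map (ZMod.castHom h3 (ZMod 3)) (x ^ 288) = 1 := by
    rw [map_pow, show (288 : ℕ) = Nat.card (GL (Fin 2) (ZMod 3)) * 6 from by rw [card_GL3],
      pow_mul, pow_card_eq_one', one_pow]
  have hdvd : ∀ i i' : Fin 2,
      (6 : ZMod (6 ^ (1 + j'))) ∣ ((x ^ 288 : GL (Fin 2) (ZMod (6 ^ (1 + j')))).val - 1) i i' := by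
    intro i i'
    have d2 : 2 ∣ (((x ^ 288 : GL (Fin 2) (ZMod (6 ^ (1 + j')))).val - 1) i i').val :=
      dvd_val_of_cast_eq_zero h2 _ (red_entry_eq_one h2 _ hred2 i i')
    have d3 : 3 ∣ (((x ^ 288 : GL (Fin 2) (ZMod (6 ^ (1 + j')))).val - 1) i i').val :=
      dvd_val_of_cast_eq_zero h3 _ (red_entry_eq_one h3 _ hred3 i i')
    exact_mod_cast cast_dvd_of_dvd_val 6 _ (Nat.Coprime.mul_dvd_of_dvd_of_dvd (by norm_num) d2 d3)
  have hkey := unit_pow_eq_one 6 (1 + j') rfl (by omega) (x ^ 288) hdvd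
  rw [show 1 + j' - 1 = j' from by omega, ← pow_mul] at hkey
  exact hkey

private lemma h_side (p k' : ℕ) (hp0 : p ≠ 0) (hpk' : (p : ℕ) ∣ p ^ (1 + k'))
    (u : GL (Fin 2) (ZMod (p ^ (1 + k'))))
    (hred : Matrix.GeneralLinearGroup.map (ZMod.castHom hpk' (ZMod p)) u ∈ unipSub p) :
    u ^ p ^ (1 + k') = 1 := by
  haveI : NeZero (p ^ (1 + k')) := ⟨pow_ne_zero _ hp0⟩
  obtain ⟨h10, h00, h11⟩ := hred
  have h1 : Matrix.GeneralLinearGroup.map (ZMod.castHom hpk' (ZMod p)) (u ^ p) = 1 := by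
    rw [map_pow]
    exact unip_pow_eq_one _ h10 h00 h11
  have hdvd : ∀ i i' : Fin 2,
      (p : ZMod (p ^ (1 + k'))) ∣ ((u ^ p : GL (Fin 2) (ZMod (p ^ (1 + k')))).val - 1) i i' :=
    fun i i' => cast_dvd_of_dvd_val p _
      (dvd_val_of_cast_eq_zero hpk' _ (red_entry_eq_one hpk' _ h1 i i'))
  have hkey := unit_pow_eq_one p (1 + k') rfl (by omega) (u ^ p) hdvd
  rw [show 1 + k' - 1 = k' from by omega, ← pow_mul] at hkey
  convert hkey using 2
  rw [pow_add, pow_one]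

theorem subsingleton_of_common_quotient_of_commutators' (p j k : ℕ) (hp : p.Prime)
    (hp5 : 5 ≤ p) (hj : 1 ≤ j) (hk : 1 ≤ k)
    (G : Subgroup (GL (Fin 2) (ZMod (6 ^ j))))
    (H : Subgroup (GL (Fin 2) (ZMod (p ^ k))))
    (hH : ∀ A ∈ H, (p : ZMod (p ^ k)) ∣ (A : Matrix (Fin 2) (Fin 2) (ZMod (p ^ k))) 1 0)
    (Q : Type) [Group Q]
    (f : ↥(commutator ↥G) →* Q) (g : ↥(commutator ↥H) →* Q)
    (hf : Function.Surjective f) (hg : Function.Surjective g) :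
    Subsingleton Q := by
  obtain ⟨j', rfl⟩ := Nat.exists_eq_add_of_le hj
  obtain ⟨k', rfl⟩ := Nat.exists_eq_add_of_le hk
  have hpk' : (p : ℕ) ∣ p ^ (1 + k') := dvd_pow_self p (by omega)
  set redp := Matrix.GeneralLinearGroup.map (n := Fin 2) (ZMod.castHom hpk' (ZMod p)) with hredp
  have hmem : ∀ gg : ↥H, Units.val (redp (H.subtype gg)) 1 0 = 0 := by
    intro gg
    obtain ⟨c, hc⟩ := hH _ gg.2
    show (ZMod.castHom hpk' (ZMod p)).mapMatrix
      (Units.val (gg : GL (Fin 2) (ZMod (p ^ (1 + k'))))) 1 0 = 0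
    rw [RingHom.mapMatrix_apply, Matrix.map_apply, hc, _root_.map_mul, map_natCast,
      ZMod.natCast_self, zero_mul]
  have hcomm : commutator ↥H ≤ Subgroup.comap (redp.comp H.subtype) (unipSub p) := by
    rw [commutator_def, Subgroup.commutator_le]
    intro g1 _ g2 _
    show (redp.comp H.subtype) ⁅g1, g2⁆ ∈ unipSub p
    rw [map_commutatorElement]
    exact ⟨commutator10 _ _ (hmem g1) (hmem g2), commutator00 _ _ (hmem g1) (hmem g2),
      commutator11 _ _ (hmem g1) (hmem g2)⟩
  constructor
  intro q1 q2
  suffices hq : ∀ q : Q, q = 1 by rw [hq q1, hq q2]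
  intro q
  have hA : q ^ (288 * 6 ^ j') = 1 := by
    obtain ⟨x, rfl⟩ := hf q
    rw [← map_pow, ← map_one f]
    congr 1
    apply Subtype.ext
    apply Subtype.ext
    push_cast
    exact g_side j' _
  have hB : q ^ p ^ (1 + k') = 1 := by
    obtain ⟨y, rfl⟩ := hg q
    rw [← map_pow, ← map_one g]
    congr 1
    apply Subtype.ext
    apply Subtype.ext
    push_cast
    exact h_side p k' hp.ne_zero hpk' _ (hcomm y.2)
  have hnd : ¬ p ∣ 288 * 6 ^ j' := by
    intro hd
    rcases (Nat.Prime.dvd_mul hp).mp hd with h | h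
    · rw [show (288 : ℕ) = 2 ^ 5 * 3 ^ 2 from by norm_num] at h
      rcases (Nat.Prime.dvd_mul hp).mp h with h' | h'
      · have := Nat.le_of_dvd (by norm_num) (hp.dvd_of_dvd_pow h'); omega
      · have := Nat.le_of_dvd (by norm_num) (hp.dvd_of_dvd_pow h'); omega
    · have h6 : p ∣ 6 := hp.dvd_of_dvd_pow h
      rw [show (6 : ℕ) = 2 * 3 from by norm_num] at h6
      rcases (Nat.Prime.dvd_mul hp).mp h6 with h' | h'
      · have := Nat.le_of_dvd (by norm_num) h'; omega
      · have := Nat.le_of_dvd (by norm_num) h'; omega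
  have hd1 : orderOf q ∣ 288 * 6 ^ j' := orderOf_dvd_of_pow_eq_one hA
  have hd2 : orderOf q ∣ p ^ (1 + k') := orderOf_dvd_of_pow_eq_one hB
  have hcop : Nat.Coprime (p ^ (1 + k')) (288 * 6 ^ j') :=
    Nat.Coprime.pow_left _ ((Nat.Prime.coprime_iff_not_dvd hp).mpr hnd)
  have hdg := Nat.dvd_gcd hd2 hd1
  rw [Nat.Coprime] at hcop
  rw [hcop] at hdg
  exact orderOf_eq_one_iff.mp (Nat.dvd_one.mp hdg)

/-- Finite-level form of Lemma 5.2: if `p ≥ 5` is prime, `G ≤ GL₂(ℤ/6ʲℤ)` and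
`H ≤ B₀(pᵏ) ≤ GL₂(ℤ/pᵏℤ)`, then any common quotient `Q` of the commutator
subgroups `[G, G]` and `[H, H]` is trivial. -/
theorem subsingleton_of_common_quotient_of_commutators (p j k : ℕ) (hp : p.Prime)
    (hp5 : 5 ≤ p) (hj : 1 ≤ j) (hk : 1 ≤ k)
    (G : Subgroup (GL (Fin 2) (ZMod (6 ^ j))))
    (H : Subgroup (GL (Fin 2) (ZMod (p ^ k)))) (hH : H ≤ Borel0 p k)
    (Q : Type) [Group Q]
    (f : ↥(commutator ↥G) →* Q) (g : ↥(commutator ↥H) →* Q)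
    (hf : Function.Surjective f) (hg : Function.Surjective g) :
    Subsingleton Q := by
  exact subsingleton_of_common_quotient_of_commutators' p j k hp hp5 hj hk G H
    (fun A hA => hH hA) Q f g hf hg
end
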